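/- arXiv:2012.13706 — 8 statements merged into one kernel-verified Lean document; each statement's English description precedes it below -/
import Mathlib

section
/- Code-Anticode Bound: Let V be a finite set with a translation-invariant distance on an abelian group structure, d ≥ 1, C ⊆ V a set with pairwise distances ≥ d, and A ⊆ V a nonempty set with pairwise distances ≤ d−1. Then |C|·|A| ≤ |V|. -/
/-- Code-Anticode Bound: in a finite abelian group V with a translation-invariant
distance, if C has pairwise distances ≥ d and A is nonempty with pairwise distances
≤ d − 1, then |C|·|A| ≤ |V|. -/
theorem code_anticode_bound {V : Type*} [AddCommGroup V] [Fintype V]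
    (dist : V → V → ℝ)
    (hinv : ∀ x y z : V, dist (x + z) (y + z) = dist x y)
    (d : ℕ) (hd : 1 ≤ d) (C A : Finset V) (hA : A.Nonempty)
    (hC : ∀ X ∈ C, ∀ Y ∈ C, X ≠ Y → (d : ℝ) ≤ dist X Y)
    (hAd : ∀ X ∈ A, ∀ Y ∈ A, dist X Y ≤ (d : ℝ) - 1) :
    C.card * A.card ≤ Fintype.card V := by
  rw [← Finset.card_product, ← Finset.card_univ]
  apply Finset.card_le_card_of_injOn (fun p => p.1 - p.2) (fun _ _ => Finset.mem_univ _)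
  rintro ⟨c₁, a₁⟩ h₁ ⟨c₂, a₂⟩ h₂ h
  simp only [Finset.coe_product, Set.mem_prod] at h₁ h₂
  replace h : c₁ - a₁ = c₂ - a₂ := h
  have hc : c₁ = c₂ := by
    by_contra hne
    have hb := hC c₁ h₁.1 c₂ h₂.1 hne
    have : dist c₁ c₂ = dist a₁ a₂ := by
      have e1 : c₁ = a₁ + (c₁ - a₁) := by abel
      have e2 : c₂ = a₂ + (c₁ - a₁) := by rw [h]; abel
      rw [e1, e2, hinv]
    have := hAd a₁ h₁.2 a₂ h₂.2
    have hd' : (1 : ℝ) ≤ d := by exact_mod_cast hd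
    linarith
  have ha : a₁ = a₂ := by
    have : c₁ - a₁ = c₂ - a₂ := h
    rw [hc] at this
    exact sub_right_injective this
  exact Prod.ext hc ha
end

section
/- In the graph Γ(Π) on the vertex set Π = ⊕_{i=1}^t F^{n_i × m_i} where X and Y are adjacent iff srk(X − Y) = 1, the geodesic (path-length) distance between any two vertices X and Y equals srk(X − Y). -/
open Matrix Module Submodule

/-- The sum-rank of a tuple of matrices. -/
noncomputable def srk {F : Type*} [Field F] {t : ℕ} {n m : Fin t → ℕ}
    (X : ∀ i : Fin t, Matrix (Fin (n i)) (Fin (m i)) F) : ℕ :=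
  ∑ i, (X i).rank


section MatrixLemmas

variable {F : Type*} [Field F] {p q : ℕ}

lemma aux_rank_eq_zero_iff (A : Matrix (Fin p) (Fin q) F) : A.rank = 0 ↔ A = 0 := by
  constructor
  · intro h
    have h2 : LinearMap.range A.mulVecLin = ⊥ := Submodule.finrank_eq_zero.mp h
    have h3 : A.mulVecLin = 0 := LinearMap.range_eq_bot.mp h2
    ext i j
    have := congrFun (LinearMap.congr_fun h3 (Pi.single j 1)) i
    simpa [Matrix.mulVecLin_apply, Matrix.mulVec_single] using this
  · rintro rfl; exact Matrix.rank_zero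

lemma aux_rank_neg (A : Matrix (Fin p) (Fin q) F) : (-A).rank = A.rank := by
  have : (-A).mulVecLin = -A.mulVecLin := by
    ext v i; simp [Matrix.mulVecLin_apply, Matrix.neg_mulVec]
  rw [Matrix.rank, Matrix.rank, this, LinearMap.range_neg]

lemma aux_rank_add_le (A B : Matrix (Fin p) (Fin q) F) :
    (A + B).rank ≤ A.rank + B.rank := by
  have hle : LinearMap.range (A + B).mulVecLin ≤
      LinearMap.range A.mulVecLin ⊔ LinearMap.range B.mulVecLin := by
    rintro x ⟨v, rfl⟩
    rw [Matrix.mulVecLin_add]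
    exact Submodule.add_mem_sup ⟨v, rfl⟩ ⟨v, rfl⟩
  calc (A + B).rank ≤ finrank F ↑(LinearMap.range A.mulVecLin ⊔ LinearMap.range B.mulVecLin) :=
        Submodule.finrank_mono hle
    _ ≤ A.rank + B.rank := Submodule.finrank_add_le_finrank_add_finrank _ _

/-- Key lemma: from a nonzero matrix one can subtract a rank-one matrix
and strictly decrease the rank. -/
lemma aux_exists_rank_one_sub (A : Matrix (Fin p) (Fin q) F) (hA : A ≠ 0) :
    ∃ R : Matrix (Fin p) (Fin q) F, R.rank = 1 ∧ (A - R).rank + 1 ≤ A.rank := by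
  have : ∃ i j, A i j ≠ 0 := by
    by_contra h
    push_neg at h
    exact hA (by ext i j; exact h i j)
  obtain ⟨i0, j0, h0⟩ := this
  set R : Matrix (Fin p) (Fin q) F := Matrix.of fun i j => A i j0 * A i0 j / A i0 j0 with hR
  have hRmul : ∀ v : Fin q → F,
      R.mulVec v = ((∑ j, A i0 j * v j) / A i0 j0) • fun i => A i j0 := by
    intro v
    ext i
    simp only [Matrix.mulVec, dotProduct, hR, Matrix.of_apply, Pi.smul_apply,
      smul_eq_mul, Finset.sum_div, Finset.mul_sum, Finset.sum_mul]
    refine Finset.sum_congr rfl fun j _ => ?_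
    field_simp
  -- R has rank one
  have hRrank : R.rank = 1 := by
    have hle : LinearMap.range R.mulVecLin ≤ F ∙ (fun i => A i j0) := by
      rintro x ⟨v, rfl⟩
      rw [Matrix.mulVecLin_apply, hRmul]
      exact Submodule.smul_mem _ _ (Submodule.mem_span_singleton_self _)
    have hcol : (fun i => A i j0) ≠ (0 : Fin p → F) := fun h => h0 (congrFun h i0)
    have h1 : R.rank ≤ 1 := by
      have := Submodule.finrank_mono hle
      rwa [finrank_span_singleton hcol] at this
    have h2 : R ≠ 0 := by
      intro h
      apply h0
      have := congrFun (congrFun h i0) j0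
      simpa [hR, div_eq_iff h0] using this
    have h3 : R.rank ≠ 0 := fun hc => h2 ((aux_rank_eq_zero_iff R).mp hc)
    omega
  refine ⟨R, hRrank, ?_⟩
  -- the row i0 of A - R is zero
  have hrow : ∀ j, (A - R) i0 j = 0 := by
    intro j
    simp only [Matrix.sub_apply, hR, Matrix.of_apply]
    field_simp
    ring
  -- range of (A-R).mulVecLin lands in S
  set S : Submodule F (Fin p → F) :=
    LinearMap.range A.mulVecLin ⊓ LinearMap.ker (LinearMap.proj i0) with hS
  have hsub : LinearMap.range (A - R).mulVecLin ≤ S := by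
    rintro x ⟨v, rfl⟩
    refine ⟨?_, ?_⟩
    · -- in the range of A
      refine ⟨v - (((∑ j, A i0 j * v j) / A i0 j0) • (Pi.single j0 1 : Fin q → F)), ?_⟩
      rw [Matrix.mulVecLin_apply, Matrix.mulVecLin_apply, Matrix.mulVec_sub,
        Matrix.mulVec_smul, Matrix.sub_mulVec, hRmul v]
      ext i
      simp [Matrix.mulVec_single]
    · -- i0 coordinate is zero
      show ((A - R).mulVecLin v) i0 = 0
      rw [Matrix.mulVecLin_apply]
      show (A - R) i0 ⬝ᵥ v = 0
      have : (A - R) i0 = 0 := funext hrow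
      rw [this, zero_dotProduct]
  have hlt : S < LinearMap.range A.mulVecLin := by
    refine lt_of_le_of_ne inf_le_left ?_
    intro hEq
    have hmem : A.mulVec (Pi.single j0 1) ∈ S := by
      rw [hEq]; exact ⟨Pi.single j0 1, rfl⟩
    have := hmem.2
    simp only [LinearMap.mem_ker, LinearMap.proj_apply, Matrix.mulVec_single] at this
    exact h0 (by simpa using this)
  have h4 : finrank F S < A.rank := Submodule.finrank_lt_finrank_of_lt hlt
  have h5 : (A - R).rank ≤ finrank F S := Submodule.finrank_mono hsub
  omega

end MatrixLemmas

section SrkLemmas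

variable {F : Type*} [Field F] {t : ℕ} {n m : Fin t → ℕ}

lemma srk_eq_zero_iff (X : ∀ i : Fin t, Matrix (Fin (n i)) (Fin (m i)) F) :
    srk X = 0 ↔ X = 0 := by
  constructor
  · intro h
    funext i
    have := Finset.sum_eq_zero_iff.mp h i (Finset.mem_univ i)
    exact (aux_rank_eq_zero_iff (X i)).mp this
  · rintro rfl
    exact Finset.sum_eq_zero fun i _ => Matrix.rank_zero

lemma srk_neg (X : ∀ i : Fin t, Matrix (Fin (n i)) (Fin (m i)) F) :
    srk (-X) = srk X :=
  Finset.sum_congr rfl fun i _ => aux_rank_neg (X i)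

lemma srk_add_le (X Y : ∀ i : Fin t, Matrix (Fin (n i)) (Fin (m i)) F) :
    srk (X + Y) ≤ srk X + srk Y := by
  calc srk (X + Y) ≤ ∑ i, ((X i).rank + (Y i).rank) :=
        Finset.sum_le_sum fun i _ => aux_rank_add_le (X i) (Y i)
    _ = srk X + srk Y := Finset.sum_add_distrib

/-- One step towards `Y`: if `X ≠ Y` there is `Z` adjacent to `X` with smaller sum-rank
distance to `Y`. -/
lemma exists_step (X Y : ∀ i : Fin t, Matrix (Fin (n i)) (Fin (m i)) F) (hXY : X ≠ Y) :
    ∃ Z, srk (X - Z) = 1 ∧ X ≠ Z ∧ srk (Z - Y) + 1 ≤ srk (X - Y) := by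
  have : ∃ i, (X - Y) i ≠ 0 := by
    by_contra h
    push_neg at h
    exact hXY (by funext i; exact sub_eq_zero.mp (h i))
  obtain ⟨i, hi⟩ := this
  obtain ⟨R, hR1, hR2⟩ := aux_exists_rank_one_sub ((X - Y) i) hi
  classical
  set Z : ∀ i : Fin t, Matrix (Fin (n i)) (Fin (m i)) F :=
    Function.update X i (X i - R) with hZ
  have hXZi : (X - Z) i = R := by simp [hZ]
  have hXZj : ∀ j, j ≠ i → (X - Z) j = 0 := by
    intro j h
    simp [hZ, Function.update_of_ne h]
  have hsrkXZ : srk (X - Z) = 1 := by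
    unfold srk
    rw [Finset.sum_eq_single i]
    · rw [hXZi]; exact hR1
    · intro j _ hj
      rw [hXZj j hj, Matrix.rank_zero]
    · simp
  have hXneZ : X ≠ Z := by
    intro h
    have h1 : (X - Z) i = 0 := by rw [h]; simp
    rw [hXZi] at h1
    rw [h1, Matrix.rank_zero] at hR1
    exact one_ne_zero hR1.symm
  refine ⟨Z, hsrkXZ, hXneZ, ?_⟩
  have hZYi : (Z - Y) i = (X - Y) i - R := by simp [hZ]; abel
  have hZYj : ∀ j, j ≠ i → (Z - Y) j = (X - Y) j := by
    intro j h
    simp [hZ, Function.update_of_ne h]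
  unfold srk
  rw [← Finset.add_sum_erase _ _ (Finset.mem_univ i),
    ← Finset.add_sum_erase _ (fun j => ((X - Y) j).rank) (Finset.mem_univ i)]
  have hrest : ∑ j ∈ Finset.univ.erase i, ((Z - Y) j).rank
      = ∑ j ∈ Finset.univ.erase i, ((X - Y) j).rank := by
    refine Finset.sum_congr rfl fun j hj => ?_
    rw [hZYj j (Finset.ne_of_mem_erase hj)]
  rw [hrest, hZYi]
  omega

end SrkLemmas

section GraphLemmas

variable {F : Type*} [Field F] {t : ℕ} {n m : Fin t → ℕ}

lemma exists_walk_le (r : ℕ) :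
    ∀ X Y : ∀ i : Fin t, Matrix (Fin (n i)) (Fin (m i)) F, srk (X - Y) ≤ r →
      ∃ w : (SimpleGraph.fromRel (fun A B : ∀ i : Fin t, Matrix (Fin (n i)) (Fin (m i)) F => srk (A - B) = 1)).Walk X Y, w.length ≤ r := by
  induction r with
  | zero =>
    intro X Y h
    have : X = Y := by
      have := (srk_eq_zero_iff (X - Y)).mp (Nat.le_zero.mp h)
      exact sub_eq_zero.mp this
    subst this
    exact ⟨SimpleGraph.Walk.nil, by simp⟩
  | succ r ih =>
    intro X Y h
    by_cases hXY : X = Y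
    · subst hXY; exact ⟨SimpleGraph.Walk.nil, by simp⟩
    · obtain ⟨Z, h1, h2, h3⟩ := exists_step X Y hXY
      obtain ⟨w, hw⟩ := ih Z Y (by omega)
      refine ⟨SimpleGraph.Walk.cons ((SimpleGraph.fromRel_adj ..).2 ⟨h2, Or.inl h1⟩) w, ?_⟩
      rw [SimpleGraph.Walk.length_cons]
      omega

lemma srk_le_walk_length {X Y : ∀ i : Fin t, Matrix (Fin (n i)) (Fin (m i)) F}
    (w : (SimpleGraph.fromRel (fun A B : ∀ i : Fin t, Matrix (Fin (n i)) (Fin (m i)) F => srk (A - B) = 1)).Walk X Y) : srk (X - Y) ≤ w.length := by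
  induction w with
  | nil =>
    simp [sub_self, (srk_eq_zero_iff _).mpr rfl]
  | @cons A B C h w ih =>
    have hAB : srk (A - B) = 1 := by
      rcases h.2 with h' | h'
      · exact h'
      · rw [← srk_neg (A - B), neg_sub]; exact h'
    calc srk (A - C) ≤ srk (A - B) + srk (B - C) := by
          have := srk_add_le (A - B) (B - C)
          simpa [sub_add_sub_cancel] using this
      _ ≤ 1 + w.length := by rw [hAB]; omega
      _ = (SimpleGraph.Walk.cons h w).length := by simp [Nat.add_comm]

end GraphLemmas

/-- In the graph on Π = ⊕ F^{n_i × m_i} where X and Y are adjacent iff srk(X − Y) = 1,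
the geodesic (path-length) distance between any two vertices equals srk(X − Y). -/
theorem geodesic_dist_eq_srk {F : Type*} [Field F] {t : ℕ} {n m : Fin t → ℕ}
    (X Y : ∀ i : Fin t, Matrix (Fin (n i)) (Fin (m i)) F) :
    (SimpleGraph.fromRel (fun A B => srk (A - B) = 1)).dist X Y = srk (X - Y) := by
  obtain ⟨w, hw⟩ := exists_walk_le (srk (X - Y)) X Y le_rfl
  refine le_antisymm ((SimpleGraph.dist_le w).trans hw) ?_
  obtain ⟨p, hp⟩ := SimpleGraph.Reachable.exists_walk_length_eq_dist ⟨w⟩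
  rw [← hp]
  exact srk_le_walk_length p
end

section
/- Upper bound for linear anticodes: if C ≤ Π = ⊕_{i=1}^t F^{n_i × m_i} is a linear subspace with srk(X) ≤ r for all X ∈ C (with n_i ≤ m_i for all i), then dim(C) ≤ max{ Σ_{i=1}^t m_i u_i : u ∈ ℕ_0^t, 0 ≤ u_i ≤ n_i, Σ u_i = r }. -/
lemma exists_between_sum {t : ℕ} (n : Fin t → ℕ) {r : ℕ} (h2 : r ≤ ∑ i, n i) :
    ∀ (d : ℕ) (v : Fin t → ℕ), (∀ i, v i ≤ n i) → ∑ i, v i ≤ r → r - ∑ i, v i = d →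
    ∃ u : Fin t → ℕ, (∀ i, v i ≤ u i) ∧ (∀ i, u i ≤ n i) ∧ ∑ i, u i = r := by
  intro d
  induction d with
  | zero =>
    intro v hv hle hd
    exact ⟨v, fun i => le_rfl, hv, by omega⟩
  | succ d ih =>
    intro v hv hle hd
    have hlt : ∑ i, v i < r := by omega
    have : ∃ i, v i < n i := by
      by_contra h
      push_neg at h
      have : ∑ i, n i ≤ ∑ i, v i := Finset.sum_le_sum fun i _ => h i
      omega
    obtain ⟨i, hi⟩ := this
    set v' := Function.update v i (v i + 1) with hv'
    have hsum : ∑ j, v' j = (∑ j, v j) + 1 := by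
      rw [hv', Finset.sum_update_of_mem (Finset.mem_univ i), Finset.sdiff_singleton_eq_erase]
      have := Finset.sum_erase_add Finset.univ v (Finset.mem_univ i)
      omega
    obtain ⟨u, hu1, hu2, hu3⟩ := ih v'
      (fun j => by
        by_cases hji : j = i
        · subst hji; simp [hv', Function.update_self]; omega
        · simp [hv', Function.update_of_ne hji]; exact hv j)
      (by omega) (by omega)
    refine ⟨u, fun j => ?_, hu2, hu3⟩
    by_cases hji : j = i
    · subst hji; have := hu1 j; simp [hv', Function.update_self] at this; omega
    · have := hu1 j; simpa [hv', Function.update_of_ne hji] using this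


theorem konig_cover {α β : Type*} [DecidableEq α] [DecidableEq β] [Fintype α] [Fintype β]
    (P : Finset (α × β)) (k : ℕ)
    (hmatch : ∀ S : Finset (α × β), S ⊆ P → Set.InjOn Prod.fst (S : Set (α × β)) → Set.InjOn Prod.snd (S : Set (α × β)) →
      S.card ≤ k) :
    ∃ (R : Finset α) (Cs : Finset β), R.card + Cs.card ≤ k ∧ ∀ p ∈ P, p.1 ∈ R ∨ p.2 ∈ Cs := by
  classical
  let covers := (Finset.univ : Finset (Finset α × Finset β)).filter
    (fun RC => ∀ p ∈ P, p.1 ∈ RC.1 ∨ p.2 ∈ RC.2)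
  have hne : covers.Nonempty := ⟨(Finset.univ, Finset.univ), by simp [covers]⟩
  obtain ⟨RC, hRCmem, hmin⟩ := Finset.exists_min_image covers
    (fun RC => RC.1.card + RC.2.card) hne
  obtain ⟨R, Cs⟩ := RC
  have hcov : ∀ p ∈ P, p.1 ∈ R ∨ p.2 ∈ Cs := by
    have := (Finset.mem_filter.1 hRCmem).2
    simpa using this
  -- Hall condition for rows
  have hallR : ∀ s : Finset {x // x ∈ R},
      s.card ≤ (s.biUnion (fun x => ((P.filter (fun p => p.1 = ↑x ∧ p.2 ∉ Cs)).image Prod.snd))).card := by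
    intro s
    by_contra hlt
    push_neg at hlt
    set bi := s.biUnion (fun x => ((P.filter (fun p => p.1 = ↑x ∧ p.2 ∉ Cs)).image Prod.snd)) with hbi
    set Rs := s.image (fun x : {x // x ∈ R} => (x : α)) with hRs
    have hRsub : Rs ⊆ R := by
      intro a ha
      obtain ⟨x, _, rfl⟩ := Finset.mem_image.1 ha
      exact x.2
    have hRscard : Rs.card = s.card := Finset.card_image_of_injective _ Subtype.coe_injective
    have hcov' : ((R \ Rs, Cs ∪ bi) : Finset α × Finset β) ∈ covers := by
      simp only [covers, Finset.mem_filter, Finset.mem_univ, true_and]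
      intro p hp
      rcases hcov p hp with h1 | h2
      · by_cases hmem : p.1 ∈ Rs
        · obtain ⟨x, hx, hxe⟩ := Finset.mem_image.1 hmem
          by_cases hc : p.2 ∈ Cs
          · exact Or.inr (Finset.mem_union_left _ hc)
          · refine Or.inr (Finset.mem_union_right _ ?_)
            refine Finset.mem_biUnion.2 ⟨x, hx, ?_⟩
            exact Finset.mem_image.2 ⟨p, Finset.mem_filter.2 ⟨hp, by rw [hxe], hc⟩, rfl⟩
        · exact Or.inl (Finset.mem_sdiff.2 ⟨h1, hmem⟩)
      · exact Or.inr (Finset.mem_union_left _ h2)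
    have := hmin _ hcov'
    simp only at this
    have h1 : (R \ Rs).card = R.card - Rs.card := Finset.card_sdiff_of_subset hRsub
    have h2 : (Cs ∪ bi).card ≤ Cs.card + bi.card := Finset.card_union_le _ _
    have h3 : Rs.card ≤ R.card := Finset.card_le_card hRsub
    omega
  obtain ⟨f, hfinj, hf⟩ := (Finset.all_card_le_biUnion_card_iff_exists_injective _).1 hallR
  have hallC : ∀ s : Finset {y // y ∈ Cs},
      s.card ≤ (s.biUnion (fun y => ((P.filter (fun p => p.2 = ↑y ∧ p.1 ∉ R)).image Prod.fst))).card := by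
    intro s
    by_contra hlt
    push_neg at hlt
    set bi := s.biUnion (fun y => ((P.filter (fun p => p.2 = ↑y ∧ p.1 ∉ R)).image Prod.fst)) with hbi
    set Css := s.image (fun y : {y // y ∈ Cs} => (y : β)) with hCss
    have hCsub : Css ⊆ Cs := by
      intro a ha
      obtain ⟨y, _, rfl⟩ := Finset.mem_image.1 ha
      exact y.2
    have hCscard : Css.card = s.card := Finset.card_image_of_injective _ Subtype.coe_injective
    have hcov' : ((R ∪ bi, Cs \ Css) : Finset α × Finset β) ∈ covers := by
      simp only [covers, Finset.mem_filter, Finset.mem_univ, true_and]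
      intro p hp
      rcases hcov p hp with h1 | h2
      · exact Or.inl (Finset.mem_union_left _ h1)
      · by_cases hmem : p.2 ∈ Css
        · obtain ⟨y, hy, hye⟩ := Finset.mem_image.1 hmem
          by_cases hc : p.1 ∈ R
          · exact Or.inl (Finset.mem_union_left _ hc)
          · refine Or.inl (Finset.mem_union_right _ ?_)
            refine Finset.mem_biUnion.2 ⟨y, hy, ?_⟩
            exact Finset.mem_image.2 ⟨p, Finset.mem_filter.2 ⟨hp, by rw [hye], hc⟩, rfl⟩
        · exact Or.inr (Finset.mem_sdiff.2 ⟨h2, hmem⟩)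
    have := hmin _ hcov'
    simp only at this
    have h1 : (Cs \ Css).card = Cs.card - Css.card := Finset.card_sdiff_of_subset hCsub
    have h2 : (R ∪ bi).card ≤ R.card + bi.card := Finset.card_union_le _ _
    have h3 : Css.card ≤ Cs.card := Finset.card_le_card hCsub
    omega
  obtain ⟨g, hginj, hg⟩ := (Finset.all_card_le_biUnion_card_iff_exists_injective _).1 hallC
  -- facts about f and g
  have hfP : ∀ x : {x // x ∈ R}, ((x : α), f x) ∈ P ∧ f x ∉ Cs := by
    intro x
    obtain ⟨p, hp, hpe⟩ := Finset.mem_image.1 (hf x)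
    obtain ⟨hp1, hp2, hp3⟩ := Finset.mem_filter.1 hp
    constructor
    · have : p = ((x : α), f x) := Prod.ext hp2 hpe
      rwa [this] at hp1
    · rwa [hpe] at hp3
  have hgP : ∀ y : {y // y ∈ Cs}, (g y, (y : β)) ∈ P ∧ g y ∉ R := by
    intro y
    obtain ⟨p, hp, hpe⟩ := Finset.mem_image.1 (hg y)
    obtain ⟨hp1, hp2, hp3⟩ := Finset.mem_filter.1 hp
    constructor
    · have : p = (g y, (y : β)) := Prod.ext hpe hp2
      rwa [this] at hp1
    · rwa [hpe] at hp3
  -- build the matching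
  set S1 := R.attach.image (fun x => (x.1, f x)) with hS1
  set S2 := Cs.attach.image (fun y => (g y, y.1)) with hS2
  have hS1mem : ∀ p ∈ S1, p ∈ P ∧ p.1 ∈ R ∧ p.2 ∉ Cs := by
    intro p hp
    obtain ⟨x, _, rfl⟩ := Finset.mem_image.1 hp
    exact ⟨(hfP x).1, x.2, (hfP x).2⟩
  have hS2mem : ∀ p ∈ S2, p ∈ P ∧ p.1 ∉ R ∧ p.2 ∈ Cs := by
    intro p hp
    obtain ⟨y, _, rfl⟩ := Finset.mem_image.1 hp
    exact ⟨(hgP y).1, (hgP y).2, y.2⟩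
  have hdisj : Disjoint S1 S2 := by
    rw [Finset.disjoint_left]
    intro p h1 h2
    exact (hS2mem p h2).2.1 (hS1mem p h1).2.1
  have hc1 : S1.card = R.card := by
    rw [hS1, Finset.card_image_of_injective, Finset.card_attach]
    intro a b hab
    exact Subtype.coe_injective (congrArg Prod.fst hab)
  have hc2 : S2.card = Cs.card := by
    rw [hS2, Finset.card_image_of_injective, Finset.card_attach]
    intro a b hab
    exact Subtype.coe_injective (congrArg Prod.snd hab)
  have hcard : (S1 ∪ S2).card = R.card + Cs.card := by
    rw [Finset.card_union_of_disjoint hdisj, hc1, hc2]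
  have hsub : S1 ∪ S2 ⊆ P := by
    intro p hp
    rcases Finset.mem_union.1 hp with h | h
    · exact (hS1mem p h).1
    · exact (hS2mem p h).1
  have hinj1 : Set.InjOn Prod.fst ((S1 ∪ S2 : Finset (α × β)) : Set (α × β)) := by
    intro p hp q hq hpq
    simp only [Finset.coe_union, Set.mem_union, Finset.mem_coe] at hp hq
    rcases hp with hp | hp <;> rcases hq with hq | hq
    · obtain ⟨x, _, rfl⟩ := Finset.mem_image.1 hp
      obtain ⟨x', _, rfl⟩ := Finset.mem_image.1 hq
      simp only at hpq
      have : x = x' := Subtype.coe_injective hpq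
      rw [this]
    · exact ((hS2mem q hq).2.1 (hpq ▸ (hS1mem p hp).2.1)).elim
    · exact ((hS2mem p hp).2.1 (hpq.symm ▸ (hS1mem q hq).2.1)).elim
    · obtain ⟨y, _, rfl⟩ := Finset.mem_image.1 hp
      obtain ⟨y', _, rfl⟩ := Finset.mem_image.1 hq
      simp only at hpq
      have : y = y' := hginj hpq
      rw [this]
  have hinj2 : Set.InjOn Prod.snd ((S1 ∪ S2 : Finset (α × β)) : Set (α × β)) := by
    intro p hp q hq hpq
    simp only [Finset.coe_union, Set.mem_union, Finset.mem_coe] at hp hq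
    rcases hp with hp | hp <;> rcases hq with hq | hq
    · obtain ⟨x, _, rfl⟩ := Finset.mem_image.1 hp
      obtain ⟨x', _, rfl⟩ := Finset.mem_image.1 hq
      simp only at hpq
      have : x = x' := hfinj hpq
      rw [this]
    · exact ((hS1mem p hp).2.2 (hpq.symm ▸ (hS2mem q hq).2.2)).elim
    · exact ((hS1mem q hq).2.2 (hpq ▸ (hS2mem p hp).2.2)).elim
    · obtain ⟨y, _, rfl⟩ := Finset.mem_image.1 hp
      obtain ⟨y', _, rfl⟩ := Finset.mem_image.1 hq
      simp only at hpq
      have : y = y' := Subtype.coe_injective hpq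
      rw [this]
  have := hmatch (S1 ∪ S2) hsub hinj1 hinj2
  exact ⟨R, Cs, by omega, hcov⟩

lemma cover_card_le {α β : Type*} [Fintype α] [Fintype β] [DecidableEq α] [DecidableEq β]
    (P : Finset (α × β)) (R : Finset α) (Cs : Finset β)
    (hcov : ∀ p ∈ P, p.1 ∈ R ∨ p.2 ∈ Cs) :
    P.card ≤ R.card * Fintype.card β + Cs.card * Fintype.card α := by
  have hsub : P ⊆ R ×ˢ Finset.univ ∪ Finset.univ ×ˢ Cs := by
    intro p hp
    rcases hcov p hp with h | h
    · exact Finset.mem_union_left _ (Finset.mem_product.2 ⟨h, Finset.mem_univ _⟩)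
    · exact Finset.mem_union_right _ (Finset.mem_product.2 ⟨Finset.mem_univ _, h⟩)
  calc P.card ≤ (R ×ˢ Finset.univ ∪ Finset.univ ×ˢ Cs).card := Finset.card_le_card hsub
    _ ≤ (R ×ˢ (Finset.univ : Finset β)).card + ((Finset.univ : Finset α) ×ˢ Cs).card :=
        Finset.card_union_le _ _
    _ = R.card * Fintype.card β + Cs.card * Fintype.card α := by
        rw [Finset.card_product, Finset.card_product]
        simp [Finset.card_univ, Nat.mul_comm]


lemma exists_det_sum_smul_ne_zero {F : Type*} [Field F] {k : ℕ}
    (B : Fin k → Matrix (Fin k) (Fin k) F) (A : Matrix (Fin k) (Fin k) F)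
    (hA : A.det ≠ 0)
    (hzero : ∀ v s : Fin k, s < v → B v s = 0)
    (hdiag : ∀ s, B s s = A s) :
    ∃ c : Fin k → F, (∑ v, c v • B v).det ≠ 0 := by
  classical
  -- hybrid matrix
  set H : (Fin k → F) → ℕ → Matrix (Fin k) (Fin k) F :=
    fun c T => Matrix.of (fun s u => if (s : ℕ) < T then (∑ v, c v • B v) s u else A s u) with hH
  have key : ∀ T : ℕ, T ≤ k → ∃ c : Fin k → F, (H c T).det ≠ 0 := by
    intro T
    induction T with
    | zero =>
      intro _
      refine ⟨fun _ => 0, ?_⟩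
      have : H (fun _ => 0) 0 = A := by
        ext s u
        simp [hH]
      rwa [this]
    | succ T ih =>
      intro hT
      obtain ⟨c, hc⟩ := ih (by omega)
      have hTk : T < k := hT
      set sT : Fin k := ⟨T, hTk⟩ with hsT
      -- rows < T of the sum matrix only depend on c values at indices ≤ s
      have hrow_indep : ∀ (c₁ c₂ : Fin k → F) (s : Fin k), (∀ v : Fin k, v ≤ s → c₁ v = c₂ v) →
          ∀ u, (∑ v, c₁ v • B v) s u = (∑ v, c₂ v • B v) s u := by
        intro c₁ c₂ s hagree u
        simp only [Matrix.sum_apply, Matrix.smul_apply, smul_eq_mul]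
        apply Finset.sum_congr rfl
        intro v _
        by_cases hvs : v ≤ s
        · rw [hagree v hvs]
        · have : s < v := lt_of_not_ge hvs
          have := hzero v s this
          rw [show B v s u = 0 from congrFun this u]
          ring
      -- H c' T = H c T whenever c' agrees with c below T
      have hHsame : ∀ x : F, H (Function.update c sT x) T = H c T := by
        intro x
        ext s u
        simp only [hH, Matrix.of_apply]
        by_cases hs : (s : ℕ) < T
        · simp only [hs, if_true]
          apply hrow_indep
          intro v hv
          apply Function.update_of_ne
          intro hvs
          rw [hvs] at hv
          have : (sT : ℕ) ≤ (s : ℕ) := hv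
          simp [hsT] at this
          omega
        · simp [hs]
      -- decompose det of H c' (T+1)
      have hupd : ∀ x : F, H (Function.update c sT x) (T + 1) =
          (H c T).updateRow sT (fun u =>
            x * A sT u + (∑ v, (Function.update c sT 0) v • B v) sT u) := by
        intro x
        ext s u
        by_cases hs : s = sT
        · subst hs
          rw [Matrix.updateRow_self]
          simp only [hH, Matrix.of_apply]
          have hlt : (sT : ℕ) < T + 1 := by simp [hsT]
          simp only [hlt, if_true]
          -- expand row sT
          simp only [Matrix.sum_apply, Matrix.smul_apply, smul_eq_mul]
          rw [Finset.sum_eq_add_sum_sdiff_singleton_of_mem (Finset.mem_univ sT)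
            (fun v => Function.update c sT x v * B v sT u)]
          have h2 : ∑ v ∈ Finset.univ \ {sT}, Function.update c sT x v * B v sT u =
              ∑ v ∈ Finset.univ \ {sT}, Function.update c sT 0 v * B v sT u := by
            apply Finset.sum_congr rfl
            intro v hv
            have hne : v ≠ sT := by
              simp only [Finset.mem_sdiff, Finset.mem_singleton] at hv
              exact hv.2
            rw [Function.update_of_ne hne, Function.update_of_ne hne]
          rw [h2]
          rw [Finset.sum_eq_add_sum_sdiff_singleton_of_mem (Finset.mem_univ sT)
            (fun v => Function.update c sT 0 v * B v sT u)]
          simp only [Function.update_self]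
          rw [show B sT sT = A sT from hdiag sT]
          ring
        · rw [Matrix.updateRow_ne hs]
          have : (s : ℕ) < T + 1 ↔ (s : ℕ) < T := by
            constructor
            · intro h
              rcases Nat.lt_succ_iff_lt_or_eq.1 h with h | h
              · exact h
              · exfalso; exact hs (Fin.ext h)
            · omega
          simp only [hH, Matrix.of_apply, this]
          by_cases hs2 : (s : ℕ) < T
          · simp only [hs2, if_true]
            apply hrow_indep
            intro v hv
            apply Function.update_of_ne
            intro hvs
            rw [hvs] at hv
            have : (sT : ℕ) ≤ (s : ℕ) := hv
            simp [hsT] at this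
            omega
          · simp [hs2]
      -- linearity of det in the row
      set w : Fin k → F := fun u => (∑ v, (Function.update c sT 0) v • B v) sT u with hw
      have hdet : ∀ x : F, (H (Function.update c sT x) (T + 1)).det =
          x * (H c T).det + ((H c T).updateRow sT w).det := by
        intro x
        rw [hupd x]
        have : (fun u => x * A sT u + w u) = (x • (A sT) + w) := by
          ext u; simp [hw, Pi.smul_apply, smul_eq_mul]
        rw [this, Matrix.det_updateRow_add, Matrix.det_updateRow_smul]
        have hself : (H c T).updateRow sT (A sT) = H c T := by
          have : A sT = H c T sT := by
            funext u
            simp only [hH, Matrix.of_apply, hsT, Fin.val_mk]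
            rw [if_neg (Nat.lt_irrefl T)]
          rw [this, Matrix.updateRow_eq_self]
        rw [hself]
      by_cases hE : ((H c T).updateRow sT w).det = 0
      · refine ⟨Function.update c sT 1, ?_⟩
        rw [hdet 1, hE]
        simpa using hc
      · refine ⟨Function.update c sT 0, ?_⟩
        rw [hdet 0]
        simpa using hE
  obtain ⟨c, hc⟩ := key k le_rfl
  refine ⟨c, ?_⟩
  have : H c k = ∑ v, c v • B v := by
    ext s u
    simp [hH, s.isLt]
  rwa [this] at hc


section RankLemmas

variable {F : Type*} [Field F]

lemma rank_submatrix_le_general {α β γ δ : Type*} [Fintype α] [Fintype β] [Fintype γ] [Fintype δ]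
    [DecidableEq α] [DecidableEq β] (A : Matrix α β F) (f : γ → α) (g : δ → β) :
    (A.submatrix f g).rank ≤ A.rank := by
  classical
  have h : A.submatrix f g =
      (Matrix.of fun (i : γ) (a : α) => if f i = a then (1 : F) else 0) * A *
      (Matrix.of fun (b : β) (j : δ) => if b = g j then (1 : F) else 0) := by
    ext i j
    simp [Matrix.mul_apply, ite_mul, mul_ite, Finset.sum_ite_eq, Finset.sum_ite_eq',
      Matrix.submatrix_apply]
  rw [h]
  exact le_trans (Matrix.rank_mul_le_left _ _) (Matrix.rank_mul_le_right _ _)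

lemma matrix_rank_add_le {α β : Type*} [Fintype α] [Fintype β] (A B : Matrix α β F) :
    (A + B).rank ≤ A.rank + B.rank := by
  classical
  rw [Matrix.rank, Matrix.rank, Matrix.rank, Matrix.mulVecLin_add]
  have hrange : LinearMap.range (A.mulVecLin + B.mulVecLin) ≤
      LinearMap.range A.mulVecLin ⊔ LinearMap.range B.mulVecLin := by
    rintro y ⟨v, rfl⟩
    exact Submodule.mem_sup.2 ⟨A.mulVecLin v, ⟨v, rfl⟩, B.mulVecLin v, ⟨v, rfl⟩, rfl⟩
  exact le_trans (Submodule.finrank_mono hrange)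
    (Submodule.finrank_add_le_finrank_add_finrank _ _)

lemma matrix_rank_sum_le {ι α β : Type*} [Fintype α] [Fintype β] (s : Finset ι)
    (A : ι → Matrix α β F) : (∑ i ∈ s, A i).rank ≤ ∑ i ∈ s, (A i).rank := by
  classical
  induction s using Finset.cons_induction with
  | empty => simp
  | cons i s hi ih =>
    rw [Finset.sum_cons, Finset.sum_cons]
    exact le_trans (matrix_rank_add_le _ _) (by omega)

lemma rank_blockDiagonal'_le {t : ℕ} {n m : Fin t → ℕ}
    (x : ∀ i, Matrix (Fin (n i)) (Fin (m i)) F) :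
    (Matrix.blockDiagonal' x).rank ≤ ∑ i, (x i).rank := by
  classical
  set inc : ∀ i, Matrix ((j : Fin t) × Fin (n j)) (Fin (n i)) F :=
    fun i => Matrix.of (fun p a' => if p = ⟨i, a'⟩ then (1 : F) else 0) with hinc
  set prj : ∀ i, Matrix (Fin (m i)) ((j : Fin t) × Fin (m j)) F :=
    fun i => Matrix.of (fun b' q => if q = ⟨i, b'⟩ then (1 : F) else 0) with hprj
  have hdecomp : Matrix.blockDiagonal' x = ∑ i, inc i * x i * prj i := by
    ext p q
    obtain ⟨j, a⟩ := p
    obtain ⟨j', b⟩ := q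
    rw [Matrix.sum_apply]
    have hterm : ∀ i, (inc i * x i * prj i) ⟨j, a⟩ ⟨j', b⟩ =
        ∑ b', (∑ a', (if (⟨j, a⟩ : (j : Fin t) × Fin (n j)) = ⟨i, a'⟩ then (1:F) else 0) * x i a' b')
          * (if (⟨j', b⟩ : (j : Fin t) × Fin (m j)) = ⟨i, b'⟩ then (1:F) else 0) := by
      intro i
      simp [Matrix.mul_apply, hinc, hprj]
    rw [Finset.sum_eq_single j]
    · -- i = j case
      rw [hterm j]
      by_cases hj : j' = j
      · subst hj
        rw [Matrix.blockDiagonal'_apply_eq]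
        simp [Sigma.mk.inj_iff, ite_mul, mul_ite, one_mul, zero_mul, mul_one, mul_zero,
          Finset.sum_ite_eq, Finset.sum_ite_eq']
      · rw [Matrix.blockDiagonal'_apply_ne x _ _ (fun h => hj h.symm)]
        symm
        apply Finset.sum_eq_zero
        intro b' _
        simp [Sigma.mk.inj_iff, hj]
    · intro i _ hij
      rw [hterm i]
      apply Finset.sum_eq_zero
      intro b' _
      have hji : j ≠ i := fun h => hij h.symm
      simp [Sigma.mk.inj_iff, hji]
    · intro h; exact absurd (Finset.mem_univ j) h
  rw [hdecomp]
  refine le_trans (matrix_rank_sum_le _ _) ?_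
  apply Finset.sum_le_sum
  intro i _
  exact le_trans (Matrix.rank_mul_le_left _ _) (Matrix.rank_mul_le_right _ _)

end RankLemmas

section Main


-- helper arithmetic lemma
lemma hstep_lemma : ∀ (X Y cc B cc' : ℕ), X < Y → cc < B → X * B + cc < Y * B + cc' := by
  intro X Y cc B cc' h1 h2
  have h3 : (X + 1) * B ≤ Y * B := Nat.mul_le_mul_right _ h1
  have h4 : X * B + cc < (X + 1) * B := by
    rw [add_mul, one_mul]
    exact Nat.add_lt_add_left h2 _
  exact lt_of_lt_of_le h4 (le_trans h3 (Nat.le_add_right _ _))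

/-- Upper bound for linear anticodes in the sum-rank metric: if every element of a
linear subspace C ≤ ⊕ F^{n_i × m_i} has sum-rank at most r (with n_i ≤ m_i), then
dim C ≤ max{ Σ m_i u_i : 0 ≤ u_i ≤ n_i, Σ u_i = r }. -/
theorem linear_anticode_bound {F : Type*} [Field F] {t : ℕ} (ht : 1 ≤ t)
    (n m : Fin t → ℕ) (hn : ∀ i, 1 ≤ n i) (hnm : ∀ i, n i ≤ m i)
    (r : ℕ) (hr : r ≤ ∑ i, n i)
    (C : Submodule F (∀ i : Fin t, Matrix (Fin (n i)) (Fin (m i)) F))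
    (hC : ∀ X ∈ C, srk X ≤ r) :
    Module.finrank F C ≤
      sSup {k : ℕ | ∃ u : Fin t → ℕ,
        (∀ i, u i ≤ n i) ∧ (∑ i, u i = r) ∧ k = ∑ i, m i * u i} := by
  classical
  set Q := (i : Fin t) × (Fin (n i) × Fin (m i)) with hQ
  set val : (∀ i : Fin t, Matrix (Fin (n i)) (Fin (m i)) F) → Q → F :=
    fun x q => x q.1 q.2.1 q.2.2 with hval
  set NN := Finset.univ.sup n + 1 with hNN
  set MM := Finset.univ.sup m + 1 with hMM
  have hNNlt : ∀ (i : Fin t) (a : Fin (n i)), (a : ℕ) < NN := by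
    intro i a
    have h1 : n i ≤ Finset.univ.sup n := Finset.le_sup (Finset.mem_univ i)
    have := a.isLt
    omega
  have hMMlt : ∀ (i : Fin t) (b : Fin (m i)), (b : ℕ) < MM := by
    intro i b
    have h1 : m i ≤ Finset.univ.sup m := Finset.le_sup (Finset.mem_univ i)
    have := b.isLt
    omega
  set φ : Q → ℕ := fun q => ((q.1 : ℕ) * NN + (q.2.1 : ℕ)) * MM + (q.2.2 : ℕ) with hφ
  -- order lemmas
  have hφ1 : ∀ q q' : Q, (q.1 : ℕ) < (q'.1 : ℕ) → φ q < φ q' := by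
    intro q q' h
    apply hstep_lemma
    · exact hstep_lemma _ _ _ _ _ h (hNNlt _ _)
    · exact hMMlt _ _
  have hφ2 : ∀ q q' : Q, (q.1 : ℕ) = (q'.1 : ℕ) → (q.2.1 : ℕ) < (q'.2.1 : ℕ) → φ q < φ q' := by
    intro q q' h1 h2
    apply hstep_lemma
    · rw [h1]
      exact Nat.add_lt_add_left h2 _
    · exact hMMlt _ _
  have hφ3 : ∀ q q' : Q, (q.1 : ℕ) = (q'.1 : ℕ) → (q.2.1 : ℕ) = (q'.2.1 : ℕ) →
      (q.2.2 : ℕ) < (q'.2.2 : ℕ) → φ q < φ q' := by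
    intro q q' h1 h2 h3
    simp only [hφ]
    rw [h1, h2]
    exact Nat.add_lt_add_left h3 _
  have hφinj : ∀ q q' : Q, φ q = φ q' → q = q' := by
    intro q q' h
    obtain ⟨i, a, b⟩ := q
    obtain ⟨i', a', b'⟩ := q'
    rcases lt_trichotomy (i : ℕ) (i' : ℕ) with hlt | heq | hgt
    · exact absurd h (Nat.ne_of_lt (hφ1 _ _ hlt))
    · rcases lt_trichotomy (a : ℕ) (a' : ℕ) with h2 | h2 | h2
      · exact absurd h (Nat.ne_of_lt (hφ2 _ _ heq h2))
      · rcases lt_trichotomy (b : ℕ) (b' : ℕ) with h3 | h3 | h3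
        · exact absurd h (Nat.ne_of_lt (hφ3 _ _ heq h2 h3))
        · have hii : i = i' := Fin.ext heq
          subst hii
          have haa : a = a' := Fin.ext h2
          have hbb : b = b' := Fin.ext h3
          rw [haa, hbb]
        · exact absurd h.symm (Nat.ne_of_lt (hφ3 _ _ heq.symm h2.symm h3))
      · exact absurd h.symm (Nat.ne_of_lt (hφ2 _ _ heq.symm h2))
    · exact absurd h.symm (Nat.ne_of_lt (hφ1 _ _ hgt))
  -- pivot set
  set P : Finset Q := Finset.univ.filter
    (fun q => ∃ x, x ∈ C ∧ val x q ≠ 0 ∧ ∀ q', φ q' < φ q → val x q' = 0) with hP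
  -- nonzero elements have a minimal support position, which is a pivot
  have hmin_pivot : ∀ x, x ∈ C → x ≠ 0 → ∃ q ∈ P, val x q ≠ 0 := by
    intro x hxC hx0
    have hsupp : ∃ q : Q, val x q ≠ 0 := by
      by_contra hall
      push_neg at hall
      apply hx0
      funext i
      ext a b
      exact hall ⟨i, a, b⟩
    obtain ⟨q1, hq1⟩ := hsupp
    set supp := Finset.univ.filter (fun q : Q => val x q ≠ 0) with hsupp2
    have hne : supp.Nonempty := ⟨q1, by simp [hsupp2, hq1]⟩
    obtain ⟨q0, hq0mem, hq0min⟩ := Finset.exists_min_image supp φ hne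
    have hq0val : val x q0 ≠ 0 := (Finset.mem_filter.1 hq0mem).2
    refine ⟨q0, ?_, hq0val⟩
    rw [hP, Finset.mem_filter]
    refine ⟨Finset.mem_univ _, x, hxC, hq0val, ?_⟩
    intro q' hq'
    by_contra hq'0
    have : q' ∈ supp := by simp [hsupp2, hq'0]
    exact absurd hq' (not_lt.2 (hq0min q' this))
  -- Step A : finrank C ≤ P.card
  have hstepA : Module.finrank F C ≤ P.card := by
    set L : C →ₗ[F] ({q // q ∈ P} → F) :=
      { toFun := fun x p => val (x : ∀ i : Fin t, Matrix (Fin (n i)) (Fin (m i)) F) p.1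
        map_add' := by intro x y; funext p; simp [hval]
        map_smul' := by intro c x; funext p; simp [hval] } with hL
    have hLinj : Function.Injective L := by
      rw [injective_iff_map_eq_zero]
      intro x hx
      by_contra hx0
      have hxne : (x : ∀ i : Fin t, Matrix (Fin (n i)) (Fin (m i)) F) ≠ 0 := by
        intro h
        exact hx0 (Subtype.ext h)
      obtain ⟨q, hqP, hqval⟩ := hmin_pivot _ x.2 hxne
      have : L x ⟨q, hqP⟩ = 0 := by rw [hx]; rfl
      exact hqval this
    calc Module.finrank F C ≤ Module.finrank F ({q // q ∈ P} → F) :=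
          LinearMap.finrank_le_finrank_of_injective hLinj
      _ = P.card := by rw [Module.finrank_pi]; exact Fintype.card_coe _
  -- blocks of pivots
  set Pblk : ∀ i : Fin t, Finset (Fin (n i) × Fin (m i)) :=
    fun i => Finset.univ.filter (fun pr => (⟨i, pr⟩ : Q) ∈ P) with hPblk
  have hcardP : P.card = ∑ i, (Pblk i).card := by
    have : P = Finset.univ.sigma (fun i => Pblk i) := by
      ext q
      obtain ⟨i, pr⟩ := q
      rw [Finset.mem_sigma]
      constructor
      · intro h
        exact ⟨Finset.mem_univ _, Finset.mem_filter.2 ⟨Finset.mem_univ _, h⟩⟩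
      · rintro ⟨-, h⟩
        exact (Finset.mem_filter.1 h).2
    rw [this, Finset.card_sigma]
  -- maximum matching sizes
  set good : ∀ i : Fin t, Finset (Fin (n i) × Fin (m i)) → Prop :=
    fun i S => Set.InjOn Prod.fst (S : Set (Fin (n i) × Fin (m i))) ∧
      Set.InjOn Prod.snd (S : Set (Fin (n i) × Fin (m i))) with hgood
  set ν : Fin t → ℕ := fun i => (((Pblk i).powerset).filter (good i)).sup Finset.card with hν
  have hmatch_le : ∀ (i : Fin t) S, S ⊆ Pblk i → good i S → S.card ≤ ν i := by
    intro i S h1 h2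
    exact Finset.le_sup (Finset.mem_filter.2 ⟨Finset.mem_powerset.2 h1, h2⟩)
  have hν_ach : ∀ i : Fin t, ∃ S, S ⊆ Pblk i ∧ good i S ∧ S.card = ν i := by
    intro i
    have hne : (((Pblk i).powerset).filter (good i)).Nonempty := by
      refine ⟨∅, Finset.mem_filter.2 ⟨Finset.mem_powerset.2 (Finset.empty_subset _), ?_⟩⟩
      constructor <;> simp [Set.InjOn]
    obtain ⟨S, hSmem, hSeq⟩ := Finset.exists_mem_eq_sup _ hne Finset.card
    obtain ⟨h1, h2⟩ := Finset.mem_filter.1 hSmem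
    exact ⟨S, Finset.mem_powerset.1 h1, h2, hSeq.symm⟩
  have hν_le_n : ∀ i, ν i ≤ n i := by
    intro i
    rw [hν]
    apply Finset.sup_le
    intro S hS
    obtain ⟨_, hg⟩ := Finset.mem_filter.1 hS
    calc S.card = (S.image Prod.fst).card := (Finset.card_image_of_injOn hg.1).symm
      _ ≤ Fintype.card (Fin (n i)) := Finset.card_le_card (Finset.subset_univ _) |>.trans
          (le_of_eq (Finset.card_univ))
      _ = n i := Fintype.card_fin _
  rcases le_or_gt (∑ i, ν i) r with hcase | hcase
  · -- covering case
    have hcover : ∀ i : Fin t, (Pblk i).card ≤ ν i * m i := by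
      intro i
      obtain ⟨R, Cs, hsize, hcov⟩ := konig_cover (Pblk i) (ν i)
        (fun S hsub h1 h2 => hmatch_le i S hsub ⟨h1, h2⟩)
      calc (Pblk i).card ≤ R.card * Fintype.card (Fin (m i)) + Cs.card * Fintype.card (Fin (n i)) :=
            cover_card_le _ _ _ hcov
        _ = R.card * m i + Cs.card * n i := by rw [Fintype.card_fin, Fintype.card_fin]
        _ ≤ R.card * m i + Cs.card * m i := by
            have := Nat.mul_le_mul_left Cs.card (hnm i)
            omega
        _ = (R.card + Cs.card) * m i := by ring
        _ ≤ ν i * m i := Nat.mul_le_mul_right _ hsize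
    obtain ⟨u, hu1, hu2, hu3⟩ := exists_between_sum n hr (r - ∑ i, ν i) ν hν_le_n hcase rfl
    have hPle : P.card ≤ ∑ i, m i * u i := by
      rw [hcardP]
      calc ∑ i, (Pblk i).card ≤ ∑ i, ν i * m i := Finset.sum_le_sum (fun i _ => hcover i)
        _ ≤ ∑ i, m i * u i := by
            apply Finset.sum_le_sum
            intro i _
            rw [Nat.mul_comm (m i) (u i)]
            exact Nat.mul_le_mul_right _ (hu1 i)
    have hmem : (∑ i, m i * u i) ∈ {k : ℕ | ∃ u : Fin t → ℕ,
        (∀ i, u i ≤ n i) ∧ (∑ i, u i = r) ∧ k = ∑ i, m i * u i} := ⟨u, hu2, hu3, rfl⟩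
    have hbdd : BddAbove {k : ℕ | ∃ u : Fin t → ℕ,
        (∀ i, u i ≤ n i) ∧ (∑ i, u i = r) ∧ k = ∑ i, m i * u i} := by
      refine ⟨∑ i, m i * n i, ?_⟩
      rintro k ⟨u, hu, _, rfl⟩
      exact Finset.sum_le_sum (fun i _ => Nat.mul_le_mul_left _ (hu i))
    exact le_trans hstepA (le_trans hPle (le_csSup hbdd hmem))
  · -- matching case : derive a contradiction
    exfalso
    choose S hS1 hS2 hS3 using hν_ach
    set sel : Finset Q := Finset.univ.sigma (fun i => S i) with hsel
    set k := sel.card with hk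
    have hkcard : k = ∑ i, ν i := by
      rw [hk, hsel, Finset.card_sigma]
      exact Finset.sum_congr rfl (fun i _ => hS3 i)
    have hkr : r + 1 ≤ k := by omega
    -- enumerate sel in increasing φ order
    have hφcard : (sel.image φ).card = k := by
      rw [hk]
      apply Finset.card_image_of_injOn
      intro q _ q' _ h
      exact hφinj _ _ h
    set g := (sel.image φ).orderIsoOfFin hφcard with hg
    have he_aux : ∀ s : Fin k, ∃ q, q ∈ sel ∧ φ q = (g s : ℕ) := by
      intro s
      have := (g s).2
      rw [Finset.mem_image] at this
      obtain ⟨q, hq1, hq2⟩ := this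
      exact ⟨q, hq1, hq2⟩
    choose e he1 he2 using he_aux
    have hemono : ∀ s v : Fin k, s < v → φ (e s) < φ (e v) := by
      intro s v h
      rw [he2 s, he2 v]
      exact g.strictMono h
    have heinj : Function.Injective e := by
      intro s v h
      have : (g s : ℕ) = (g v : ℕ) := by rw [← he2 s, ← he2 v, h]
      exact g.injective (Subtype.ext this)
    -- membership facts
    have hesel : ∀ s : Fin k, (e s).2 ∈ S (e s).1 := by
      intro s
      have := he1 s
      rw [hsel, Finset.mem_sigma] at this
      exact this.2
    have heP : ∀ s : Fin k, e s ∈ P := by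
      intro s
      have h2 := hS1 (e s).1 (hesel s)
      have h3 := Finset.mem_filter.1 h2
      exact h3.2
    -- equal block+row or block+col forces equality of selected pivots
    have key_row : ∀ q q' : Q, q.2 ∈ S q.1 → q'.2 ∈ S q'.1 → q.1 = q'.1 →
        (q.2.1 : ℕ) = (q'.2.1 : ℕ) → q = q' := by
      rintro ⟨i, pr⟩ ⟨i', pr'⟩ h1 h2 h3 h4
      subst h3
      simp only at h1 h2 h4
      have : pr = pr' := (hS2 i).1 h1 h2 (Fin.ext h4)
      rw [this]
    have key_col : ∀ q q' : Q, q.2 ∈ S q.1 → q'.2 ∈ S q'.1 → q.1 = q'.1 →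
        (q.2.2 : ℕ) = (q'.2.2 : ℕ) → q = q' := by
      rintro ⟨i, pr⟩ ⟨i', pr'⟩ h1 h2 h3 h4
      subst h3
      simp only at h1 h2 h4
      have : pr = pr' := (hS2 i).2 h1 h2 (Fin.ext h4)
      rw [this]
    -- normalized witnesses
    have hwit : ∀ s : Fin k, ∃ x, x ∈ C ∧ val x (e s) = 1 ∧
        ∀ q', φ q' < φ (e s) → val x q' = 0 := by
      intro s
      have hps := heP s
      rw [hP, Finset.mem_filter] at hps
      obtain ⟨-, x, hxC, hxv, hxmin⟩ := hps
      refine ⟨(val x (e s))⁻¹ • x, Submodule.smul_mem _ _ hxC, ?_, ?_⟩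
      · have : val ((val x (e s))⁻¹ • x) (e s) = (val x (e s))⁻¹ * val x (e s) := rfl
        rw [this, inv_mul_cancel₀ hxv]
      · intro q' hq'
        have : val ((val x (e s))⁻¹ • x) q' = (val x (e s))⁻¹ * val x q' := rfl
        rw [this, hxmin q' hq', mul_zero]
    choose bf hbC hb1 hb0 using hwit
    -- the matrices
    set B : Fin k → Matrix (Fin k) (Fin k) F := fun v => Matrix.of (fun s u =>
      if h : (e u).1 = (e s).1 then
        val (bf v) ⟨(e s).1, ((e s).2.1, Fin.cast (congrArg m h) (e u).2.2)⟩
      else 0) with hB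
    set A : Matrix (Fin k) (Fin k) F := Matrix.of (fun s u => B s s u) with hA
    have hApos : ∀ (s u : Fin k) (h : (e u).1 = (e s).1),
        A s u = val (bf s) ⟨(e s).1, ((e s).2.1, Fin.cast (congrArg m h) (e u).2.2)⟩ := by
      intro s u h
      simp only [hA, hB, Matrix.of_apply, dif_pos h]
    have hAneg : ∀ (s u : Fin k), (e u).1 ≠ (e s).1 → A s u = 0 := by
      intro s u h
      simp only [hA, hB, Matrix.of_apply, dif_neg h]
    have hdiagA : ∀ s : Fin k, A s s = 1 := by
      intro s
      rw [hApos s s rfl]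
      have hcast : Fin.cast (congrArg m (rfl : (e s).1 = (e s).1)) (e s).2.2 = (e s).2.2 :=
        Fin.ext rfl
      rw [hcast]
      exact hb1 s
    -- triangularity in rows
    have hzero : ∀ v s : Fin k, s < v → B v s = 0 := by
      intro v s hsv
      funext u
      show (if h : (e u).1 = (e s).1 then
        val (bf v) ⟨(e s).1, ((e s).2.1, Fin.cast (congrArg m h) (e u).2.2)⟩ else 0) = 0
      by_cases h : (e u).1 = (e s).1
      · rw [dif_pos h]
        apply hb0 v
        have hsv' : φ (e s) < φ (e v) := hemono s v hsv
        rcases lt_trichotomy ((e s).1 : ℕ) ((e v).1 : ℕ) with hb' | hb' | hb'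
        · exact hφ1 _ _ hb'
        · rcases lt_trichotomy ((e s).2.1 : ℕ) ((e v).2.1 : ℕ) with hr' | hr' | hr'
          · exact hφ2 _ _ hb' hr'
          · exfalso
            have : e s = e v := key_row _ _ (hesel s) (hesel v) (Fin.ext hb') hr'
            exact (ne_of_lt hsv) (heinj this)
          · exact absurd (hφ2 _ _ hb'.symm hr') (not_lt.2 (le_of_lt hsv'))
        · exact absurd (hφ1 _ _ hb') (not_lt.2 (le_of_lt hsv'))
      · rw [dif_neg h]
    have hdiagB : ∀ s : Fin k, B s s = A s := by
      intro s
      funext u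
      rfl
    -- A has nonzero determinant
    have hAdet : A.det ≠ 0 := by
      intro h0
      obtain ⟨w, hw0, hwA⟩ := Matrix.exists_vecMul_eq_zero_iff.2 h0
      set ψ : Fin k → ℕ := fun s => ((e s).1 : ℕ) * MM + ((e s).2.2 : ℕ) with hψ
      have hψ1 : ∀ s v : Fin k, ((e s).1 : ℕ) < ((e v).1 : ℕ) → ψ s < ψ v := by
        intro s v h
        exact hstep_lemma _ _ _ _ _ h (hMMlt _ _)
      have hψ2 : ∀ s v : Fin k, ((e s).1 : ℕ) = ((e v).1 : ℕ) →
          ((e s).2.2 : ℕ) < ((e v).2.2 : ℕ) → ψ s < ψ v := by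
        intro s v h1 h2
        simp only [hψ]
        rw [h1]
        exact Nat.add_lt_add_left h2 _
      have hψne : ∀ s v : Fin k, s ≠ v → ψ s ≠ ψ v := by
        intro s v hsv
        rcases lt_trichotomy ((e s).1 : ℕ) ((e v).1 : ℕ) with hb' | hb' | hb'
        · exact Nat.ne_of_lt (hψ1 _ _ hb')
        · rcases lt_trichotomy ((e s).2.2 : ℕ) ((e v).2.2 : ℕ) with hc' | hc' | hc'
          · exact Nat.ne_of_lt (hψ2 _ _ hb' hc')
          · exfalso
            have : e s = e v := key_col _ _ (hesel s) (hesel v) (Fin.ext hb') hc'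
            exact hsv (heinj this)
          · exact (Nat.ne_of_lt (hψ2 _ _ hb'.symm hc')).symm
        · exact (Nat.ne_of_lt (hψ1 _ _ hb')).symm
      have hA0 : ∀ s u : Fin k, ψ u < ψ s → A s u = 0 := by
        intro s u hpsi
        by_cases h : (e u).1 = (e s).1
        · rw [hApos s u h]
          apply hb0 s
          have hbv : ((e u).1 : ℕ) = ((e s).1 : ℕ) := by rw [h]
          have hcol : ((e u).2.2 : ℕ) < ((e s).2.2 : ℕ) := by
            simp only [hψ] at hpsi
            rw [hbv] at hpsi
            exact lt_of_add_lt_add_left hpsi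
          apply hφ3
          · rfl
          · rfl
          · exact hcol
        · exact hAneg s u h
      -- minimal support of w
      set supp := Finset.univ.filter (fun s : Fin k => w s ≠ 0) with hsuppw
      have hne : supp.Nonempty := by
        by_contra hemp
        apply hw0
        funext s
        show w s = 0
        by_contra hws
        exact hemp ⟨s, by simp [hsuppw, hws]⟩
      obtain ⟨u0, hu0mem, hu0min⟩ := Finset.exists_min_image supp ψ hne
      have hu0 : w u0 ≠ 0 := (Finset.mem_filter.1 hu0mem).2
      have hsum : ∑ s, w s * A s u0 = 0 := by
        have := congrFun hwA u0
        simpa [Matrix.vecMul, dotProduct] using this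
      rw [Finset.sum_eq_single u0] at hsum
      · rw [hdiagA u0, mul_one] at hsum
        exact hu0 hsum
      · intro s _ hsne
        by_cases hws : w s = 0
        · rw [hws, zero_mul]
        · have hsmem : s ∈ supp := by simp [hsuppw, hws]
          have h1 : ψ u0 ≤ ψ s := hu0min s hsmem
          have h2 : ψ u0 ≠ ψ s := fun hh => hψne s u0 hsne hh.symm
          rw [hA0 s u0 (lt_of_le_of_ne h1 h2), mul_zero]
      · intro h
        exact absurd (Finset.mem_univ u0) h
    -- get the combination with invertible submatrix
    obtain ⟨c, hcdet⟩ := exists_det_sum_smul_ne_zero B A hAdet hzero hdiagB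
    set X := ∑ v, c v • bf v with hX
    have hXC : X ∈ C := Submodule.sum_mem _ (fun v _ => Submodule.smul_mem _ _ (hbC v))
    have hXval : ∀ q : Q, val X q = ∑ v, c v * val (bf v) q := by
      intro q
      simp [hX, hval, Finset.sum_apply, Matrix.sum_apply]
    -- block diagonal entry lemma
    have hbd : ∀ (i i' : Fin t) (hii : i' = i) (a : Fin (n i)) (b : Fin (m i')),
        Matrix.blockDiagonal' X ⟨i, a⟩ ⟨i', b⟩ = X i a (Fin.cast (congrArg m hii) b) := by
      intro i i' hii a b
      subst hii
      rw [Matrix.blockDiagonal'_apply_eq]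
      have : Fin.cast (congrArg m (rfl : i' = i')) b = b := Fin.ext rfl
      rw [this]
    -- the submatrix identification
    have hMsub : (∑ v, c v • B v) = (Matrix.blockDiagonal' X).submatrix
        (fun s : Fin k => (⟨(e s).1, (e s).2.1⟩ : (i : Fin t) × Fin (n i)))
        (fun u : Fin k => (⟨(e u).1, (e u).2.2⟩ : (i : Fin t) × Fin (m i))) := by
      ext s u
      rw [Matrix.sum_apply, Matrix.submatrix_apply]
      by_cases h : (e u).1 = (e s).1
      · rw [hbd _ _ h]
        have hre : X (e s).1 (e s).2.1 (Fin.cast (congrArg m h) (e u).2.2)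
            = val X ⟨(e s).1, ((e s).2.1, Fin.cast (congrArg m h) (e u).2.2)⟩ := rfl
        rw [hre, hXval]
        apply Finset.sum_congr rfl
        intro v _
        simp only [Matrix.smul_apply, smul_eq_mul, hB, Matrix.of_apply, dif_pos h]
      · rw [Matrix.blockDiagonal'_apply_ne X _ _ (fun hh => h hh.symm)]
        apply Finset.sum_eq_zero
        intro v _
        simp only [Matrix.smul_apply, smul_eq_mul, hB, Matrix.of_apply, dif_neg h, mul_zero]
    -- conclude the contradiction
    have hrankM : (∑ v, c v • B v).rank = k := by
      rw [Matrix.rank_of_isUnit _ ((Matrix.isUnit_iff_isUnit_det _).2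
        (isUnit_iff_ne_zero.2 hcdet)), Fintype.card_fin]
    have hle1 : (∑ v, c v • B v).rank ≤ (Matrix.blockDiagonal' X).rank := by
      rw [hMsub]
      exact rank_submatrix_le_general _ _ _
    have hle2 : (Matrix.blockDiagonal' X).rank ≤ ∑ i, (X i).rank := rank_blockDiagonal'_le X
    have hsrk : srk X ≤ r := hC X hXC
    have heq2 : srk X = ∑ i, (X i).rank := rfl
    omega

end Main
end

section
/- Characterization of maximizers: with notation as in the maximization lemma, let ℓ, ℓ' be the unique indices with m_1 ≥ … ≥ m_{ℓ−1} > m_ℓ = … = m_j = … = m_{ℓ'} > m_{ℓ'+1} ≥ … ≥ m_t. A tuple u ∈ U_r achieves Σ m_i u_i = K := Σ_{i<j} m_i n_i + m_j δ if and only if u_i = n_i for i < ℓ, u_i = 0 for i > ℓ', and Σ_{i=ℓ}^{ℓ'} u_i = Σ_{i=ℓ}^{j−1} n_i + δ. -/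
open Finset

lemma sum_split3 {β : Type*} [AddCommMonoid β] {t : ℕ} {ℓ ℓ' : Fin t} (hll : ℓ ≤ ℓ')
    (g : Fin t → β) :
    ∑ i, g i = (∑ i ∈ univ.filter (· < ℓ), g i)
      + (∑ i ∈ univ.filter (fun i => ℓ ≤ i ∧ i ≤ ℓ'), g i)
      + (∑ i ∈ univ.filter (fun i : Fin t => ℓ' < i), g i) := by
  rw [← Finset.sum_filter_add_sum_filter_not univ (· < ℓ) g, add_assoc]
  congr 1
  rw [← Finset.sum_filter_add_sum_filter_not (univ.filter (fun i => ¬ i < ℓ)) (· ≤ ℓ') g,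
      filter_filter, filter_filter]
  congr 1
  · apply Finset.sum_congr _ fun _ _ => rfl
    apply filter_congr; intro i _
    simp only [not_lt, eq_iff_iff]
  · apply Finset.sum_congr _ fun _ _ => rfl
    apply filter_congr; intro i _
    simp only [not_lt, not_le, eq_iff_iff, and_iff_right_iff_imp]
    intro h; exact le_trans hll h.le

lemma sum_split2 {β : Type*} [AddCommMonoid β] {t : ℕ} {ℓ j : Fin t} (hlj : ℓ ≤ j)
    (g : Fin t → β) :
    ∑ i ∈ univ.filter (· < j), g i = (∑ i ∈ univ.filter (· < ℓ), g i)
      + ∑ i ∈ univ.filter (fun i => ℓ ≤ i ∧ i < j), g i := by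
  rw [← Finset.sum_filter_add_sum_filter_not (univ.filter (· < j)) (· < ℓ) g,
      filter_filter, filter_filter]
  congr 1
  · apply Finset.sum_congr _ fun _ _ => rfl
    apply filter_congr; intro i _
    simp only [eq_iff_iff, and_iff_right_iff_imp]
    intro h; exact lt_of_lt_of_le h hlj
  · apply Finset.sum_congr _ fun _ _ => rfl
    apply filter_congr; intro i _
    simp only [not_lt, eq_iff_iff, and_comm]

/-- Characterization of the maximizers: with r = Σ_{i<j} n_i + δ (0 ≤ δ < n_j) and
ℓ, ℓ' the indices with m_1 ≥ … ≥ m_{ℓ−1} > m_ℓ = … = m_j = … = m_{ℓ'} > m_{ℓ'+1} ≥ …,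
a tuple u with u_i ≤ n_i and Σ u_i = r achieves Σ m_i u_i = K := Σ_{i<j} m_i n_i + m_j δ
iff u_i = n_i for i < ℓ, u_i = 0 for i > ℓ', and Σ_{ℓ ≤ i ≤ ℓ'} u_i = Σ_{ℓ ≤ i < j} n_i + δ. -/
theorem maximizer_characterization {t : ℕ} (n m : Fin t → ℕ)
    (hn : ∀ i, 1 ≤ n i) (hnm : ∀ i, n i ≤ m i) (hm : Antitone m)
    (r : ℕ) (hr : r < ∑ i, n i)
    (j : Fin t) (δ : ℕ) (hδ : δ < n j)
    (hrj : r = ∑ i ∈ univ.filter (· < j), n i + δ)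
    (ℓ ℓ' : Fin t) (hℓj : ℓ ≤ j) (hjℓ' : j ≤ ℓ')
    (h1 : ∀ i, i < ℓ → m j < m i)
    (h2 : ∀ i, ℓ ≤ i → i ≤ ℓ' → m i = m j)
    (h3 : ∀ i, ℓ' < i → m i < m j)
    (u : Fin t → ℕ) (hu : ∀ i, u i ≤ n i) (husum : ∑ i, u i = r) :
    (∑ i, m i * u i = ∑ i ∈ univ.filter (· < j), m i * n i + m j * δ) ↔
      ((∀ i, i < ℓ → u i = n i) ∧ (∀ i, ℓ' < i → u i = 0) ∧
        ∑ i ∈ univ.filter (fun i => ℓ ≤ i ∧ i ≤ ℓ'), u i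
          = ∑ i ∈ univ.filter (fun i => ℓ ≤ i ∧ i < j), n i + δ) := by
  have hll : ℓ ≤ ℓ' := le_trans hℓj hjℓ'
  set A := univ.filter (· < ℓ) with hAdef
  set B := univ.filter (fun i => ℓ ≤ i ∧ i ≤ ℓ') with hBdef
  set C := univ.filter (fun i : Fin t => ℓ' < i) with hCdef
  set D := univ.filter (fun i => ℓ ≤ i ∧ i < j) with hDdef
  -- counting identity in ℕ
  have hcount : ∑ i ∈ A, n i + (∑ i ∈ D, n i + δ) = r := by
    rw [hrj, sum_split2 hℓj n]; ring
  have husplit : ∑ i ∈ A, u i + ∑ i ∈ B, u i + ∑ i ∈ C, u i = r := by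
    rw [← husum, ← sum_split3 hll u]
  -- key ℤ identity
  have ea : ∑ i ∈ A, ((m i : ℤ) - m j) * ((n i : ℤ) - u i)
      = ∑ i ∈ A, (m i : ℤ) * n i - (m j : ℤ) * ∑ i ∈ A, (n i : ℤ)
        - ∑ i ∈ A, (m i : ℤ) * u i + (m j : ℤ) * ∑ i ∈ A, (u i : ℤ) := by
    rw [Finset.mul_sum, Finset.mul_sum]
    rw [← Finset.sum_sub_distrib, ← Finset.sum_sub_distrib, ← Finset.sum_add_distrib]
    exact Finset.sum_congr rfl fun i _ => by ring
  have ec : ∑ i ∈ C, ((m j : ℤ) - m i) * u i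
      = (m j : ℤ) * ∑ i ∈ C, (u i : ℤ) - ∑ i ∈ C, (m i : ℤ) * u i := by
    rw [Finset.mul_sum, ← Finset.sum_sub_distrib]
    exact Finset.sum_congr rfl fun i _ => by ring
  have etot : (∑ i, (m i : ℤ) * u i)
      = ∑ i ∈ A, (m i : ℤ) * u i + (m j : ℤ) * ∑ i ∈ B, (u i : ℤ)
        + ∑ i ∈ C, (m i : ℤ) * u i := by
    rw [sum_split3 hll (fun i => (m i : ℤ) * u i), Finset.mul_sum]
    congr 1; congr 1
    apply Finset.sum_congr rfl
    intro i hi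
    simp only [hBdef, mem_filter, mem_univ, true_and] at hi
    rw [h2 i hi.1 hi.2]
  have ej : (∑ i ∈ univ.filter (· < j), (m i : ℤ) * n i)
      = ∑ i ∈ A, (m i : ℤ) * n i + (m j : ℤ) * ∑ i ∈ D, (n i : ℤ) := by
    rw [sum_split2 hℓj (fun i => (m i : ℤ) * n i), Finset.mul_sum]
    congr 1
    apply Finset.sum_congr rfl
    intro i hi
    simp only [hDdef, mem_filter, mem_univ, true_and] at hi
    rw [h2 i hi.1 (le_trans hi.2.le hjℓ')]
  have f3 : (∑ i ∈ A, (u i : ℤ)) + (∑ i ∈ B, (u i : ℤ)) + (∑ i ∈ C, (u i : ℤ)) = (r : ℤ) := by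
    exact_mod_cast congrArg (Nat.cast : ℕ → ℤ) husplit
  have f4 : (∑ i ∈ A, (n i : ℤ)) + ((∑ i ∈ D, (n i : ℤ)) + (δ : ℤ)) = (r : ℤ) := by
    exact_mod_cast congrArg (Nat.cast : ℕ → ℤ) hcount
  have hkey : (∑ i ∈ A, ((m i : ℤ) - m j) * ((n i : ℤ) - u i))
      + (∑ i ∈ C, ((m j : ℤ) - m i) * u i)
      = ((∑ i ∈ univ.filter (· < j), (m i : ℤ) * n i) + (m j : ℤ) * δ)
        - ∑ i, (m i : ℤ) * u i := by
    linear_combination ea + ec - ej + etot + (m j : ℤ) * f3 - (m j : ℤ) * f4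
  have hAnn : ∀ i ∈ A, (0 : ℤ) ≤ ((m i : ℤ) - m j) * ((n i : ℤ) - u i) := by
    intro i hi
    simp only [hAdef, mem_filter, mem_univ, true_and] at hi
    have := h1 i hi
    have := hu i
    apply mul_nonneg <;> simp <;> omega
  have hCnn : ∀ i ∈ C, (0 : ℤ) ≤ ((m j : ℤ) - m i) * u i := by
    intro i hi
    simp only [hCdef, mem_filter, mem_univ, true_and] at hi
    have := h3 i hi
    apply mul_nonneg <;> simp <;> omega
  constructor
  · intro heq
    have hz : ((∑ i ∈ univ.filter (· < j), (m i : ℤ) * n i) + (m j : ℤ) * δ)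
        - ∑ i, (m i : ℤ) * u i = 0 := by
      have : ((∑ i, m i * u i : ℕ) : ℤ)
          = ((∑ i ∈ univ.filter (· < j), m i * n i + m j * δ : ℕ) : ℤ) := by
        exact_mod_cast congrArg (Nat.cast : ℕ → ℤ) heq
      push_cast at this
      linarith
    rw [hz] at hkey
    have hA0 : ∑ i ∈ A, ((m i : ℤ) - m j) * ((n i : ℤ) - u i) = 0 := by
      have := Finset.sum_nonneg hAnn
      have := Finset.sum_nonneg hCnn
      linarith
    have hC0 : ∑ i ∈ C, ((m j : ℤ) - m i) * u i = 0 := by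
      have := Finset.sum_nonneg hAnn
      have := Finset.sum_nonneg hCnn
      linarith
    have c1 : ∀ i, i < ℓ → u i = n i := by
      intro i hi
      have hiA : i ∈ A := by simp [hAdef, hi]
      have := (Finset.sum_eq_zero_iff_of_nonneg hAnn).mp hA0 i hiA
      have h1i := h1 i hi
      rcases mul_eq_zero.mp this with h | h <;> omega
    have c2 : ∀ i, ℓ' < i → u i = 0 := by
      intro i hi
      have hiC : i ∈ C := by simp [hCdef, hi]
      have := (Finset.sum_eq_zero_iff_of_nonneg hCnn).mp hC0 i hiC
      have h3i := h3 i hi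
      rcases mul_eq_zero.mp this with h | h <;> omega
    refine ⟨c1, c2, ?_⟩
    have hAu : ∑ i ∈ A, u i = ∑ i ∈ A, n i := by
      apply Finset.sum_congr rfl
      intro i hi
      simp only [hAdef, mem_filter, mem_univ, true_and] at hi
      exact c1 i hi
    have hCu : ∑ i ∈ C, u i = 0 := by
      apply Finset.sum_eq_zero
      intro i hi
      simp only [hCdef, mem_filter, mem_univ, true_and] at hi
      exact c2 i hi
    omega
  · rintro ⟨c1, c2, _⟩
    have hA0 : ∑ i ∈ A, ((m i : ℤ) - m j) * ((n i : ℤ) - u i) = 0 := by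
      apply Finset.sum_eq_zero
      intro i hi
      simp only [hAdef, mem_filter, mem_univ, true_and] at hi
      rw [c1 i hi]; ring
    have hC0 : ∑ i ∈ C, ((m j : ℤ) - m i) * u i = 0 := by
      apply Finset.sum_eq_zero
      intro i hi
      simp only [hCdef, mem_filter, mem_univ, true_and] at hi
      rw [c2 i hi]; ring
    have hz : ((∑ i, m i * u i : ℕ) : ℤ)
        = ((∑ i ∈ univ.filter (· < j), m i * n i + m j * δ : ℕ) : ℤ) := by
      push_cast
      linarith [hkey, hA0, hC0]
    exact_mod_cast hz
end

section
/- Meshulam's covering theorem: let B be a nonempty finite set of matrices in F^{N×M} with pairwise distinct, nonzero elements, and let ρ(B) be the minimum number of lines (full rows or columns restricted to a block profile, or simply rows/columns of the full matrix) needed to cover the set of positions of initial entries (first nonzero entry in lexicographic order) of members of B. Then the F-linear span of B contains a matrix of rank at least ρ(B). -/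
open Finset

section Aux

variable {k : ℕ}

/-- If a permutation weakly decreases a ℕ-valued weight everywhere, it preserves it. -/
lemma meshulam_perm_fix (σ : Equiv.Perm (Fin k)) (w : Fin k → ℕ)
    (h : ∀ l, w (σ l) ≤ w l) : ∀ l, w (σ l) = w l := by
  by_contra hne
  push_neg at hne
  obtain ⟨l₀, hl₀⟩ := hne
  have hsum : ∑ l, w (σ l) = ∑ l, w l := Equiv.sum_comp σ w
  have hlt : ∑ l, w (σ l) < ∑ l, w l :=
    Finset.sum_lt_sum (fun i _ => h i)
      ⟨l₀, Finset.mem_univ _, lt_of_le_of_ne (h l₀) hl₀⟩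
  omega

lemma meshulam_inj_eq_id (f : Fin k → Fin k) (hinj : Function.Injective f)
    (h : ∀ j, f j ≤ j) : ∀ j, f j = j := by
  have hbij : Function.Bijective f := (Finite.injective_iff_bijective).mp hinj
  have := meshulam_perm_fix (Equiv.ofBijective f hbij) (fun x => (x : ℕ))
    (fun l => by simpa using h l)
  intro j
  have hj := this j
  simp only [Equiv.ofBijective_apply] at hj
  exact Fin.ext hj

/-- Key lemma: for a staircase family, some subset-sum has nonzero k×k minor. -/
lemma meshulam_key {F : Type*} [Field F] {N M : ℕ}
    (B : Fin k → Matrix (Fin N) (Fin M) F) (r : Fin k → Fin N) (c : Fin k → Fin M)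
    (hr : StrictMono r) (hc : Function.Injective c)
    (hdiag : ∀ i, B i (r i) (c i) ≠ 0)
    (hrow : ∀ i j l, j < i → B i (r j) (c l) = 0)
    (hcol : ∀ i l, c l < c i → B i (r i) (c l) = 0) :
    ∃ S : Finset (Fin k), ((∑ i ∈ S, B i).submatrix r c).det ≠ 0 := by
  classical
  set A : Fin k → Matrix (Fin k) (Fin k) F := fun i => (B i).submatrix r c with hA
  set D : (Fin k → Fin k) → F :=
    fun f => Matrix.detRowAlternating (fun j => A (f j) j) with hD
  by_contra hcon
  push_neg at hcon
  have hdet0 : ∀ S : Finset (Fin k), (∑ i ∈ S, A i).det = 0 := by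
    intro S
    have hS : (∑ i ∈ S, A i) = (∑ i ∈ S, B i).submatrix r c := by
      ext j l
      simp [hA, Matrix.sum_apply]
    rw [hS]
    exact hcon S
  -- multilinear expansion of each determinant
  have hexp : ∀ S : Finset (Fin k), (∑ i ∈ S, A i).det
      = ∑ f ∈ Fintype.piFinset (fun _ : Fin k => S), D f := by
    intro S
    have h1 : (∑ i ∈ S, A i).det
        = Matrix.detRowAlternating (fun j => ∑ i ∈ S, (fun i' => A i' j) i) := by
      congr 1
      ext j l
      simp [Matrix.sum_apply, Finset.sum_apply]
    rw [h1]
    exact (Matrix.detRowAlternating (R := F) (n := Fin k)).toMultilinearMap.map_sum_finset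
      (fun j i => A i j) (fun _ => S)
  set T : F := ∑ S ∈ (Finset.univ : Finset (Fin k)).powerset,
      (-1 : F) ^ (k - S.card) * (∑ i ∈ S, A i).det with hT
  have hT0 : T = 0 := by
    rw [hT]
    apply Finset.sum_eq_zero
    intro S _
    rw [hdet0 S, mul_zero]
  -- rewrite T as a sum over functions
  have step1 : T = ∑ S ∈ (Finset.univ : Finset (Fin k)).powerset,
      ∑ f ∈ (Finset.univ : Finset (Fin k → Fin k)),
        (if f ∈ Fintype.piFinset (fun _ : Fin k => S) then (-1 : F) ^ (k - S.card) * D f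
          else 0) := by
    rw [hT]
    refine Finset.sum_congr rfl fun S _ => ?_
    rw [hexp S, Finset.mul_sum, Finset.sum_ite_mem, Finset.univ_inter]
  have step2 : T = ∑ f ∈ (Finset.univ : Finset (Fin k → Fin k)),
      (∑ S ∈ (Finset.univ : Finset (Fin k)).powerset,
        if f ∈ Fintype.piFinset (fun _ : Fin k => S) then (-1 : F) ^ (k - S.card) else 0)
        * D f := by
    rw [step1, Finset.sum_comm]
    refine Finset.sum_congr rfl fun f _ => ?_
    rw [Finset.sum_mul]
    refine Finset.sum_congr rfl fun S _ => ?_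
    rw [ite_mul, zero_mul]
  -- the coefficient is the surjectivity indicator
  have hcoef : ∀ f : Fin k → Fin k,
      (∑ S ∈ (Finset.univ : Finset (Fin k)).powerset,
        if f ∈ Fintype.piFinset (fun _ : Fin k => S) then (-1 : F) ^ (k - S.card) else 0)
      = if Finset.image f Finset.univ = Finset.univ then (1 : F) else 0 := by
    intro f
    have hmem : ∀ S : Finset (Fin k),
        (f ∈ Fintype.piFinset (fun _ : Fin k => S)) ↔ Finset.image f Finset.univ ⊆ S := by
      intro S
      rw [Fintype.mem_piFinset, Finset.image_subset_iff]
      simp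
    calc (∑ S ∈ (Finset.univ : Finset (Fin k)).powerset,
          if f ∈ Fintype.piFinset (fun _ : Fin k => S) then (-1 : F) ^ (k - S.card) else 0)
        = ∑ S ∈ (Finset.univ : Finset (Fin k)).powerset.filter
            (fun S => Finset.image f Finset.univ ⊆ S), (-1 : F) ^ (k - S.card) := by
          rw [Finset.sum_filter]
          exact Finset.sum_congr rfl fun S _ => by simp only [hmem S]
      _ = ∑ U ∈ (Finset.image f Finset.univ)ᶜ.powerset, (-1 : F) ^ U.card := by
          refine Finset.sum_nbij' (fun S => Sᶜ) (fun U => Uᶜ) ?_ ?_ ?_ ?_ ?_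
          · intro S hS
            simp only [Finset.mem_filter, Finset.mem_powerset] at hS ⊢
            exact Finset.compl_subset_compl.mpr hS.2
          · intro U hU
            simp only [Finset.mem_powerset] at hU
            simp only [Finset.mem_filter, Finset.mem_powerset]
            refine ⟨Finset.subset_univ _, ?_⟩
            have := Finset.compl_subset_compl.mpr hU
            simpa using this
          · intro S _; simp
          · intro U _; simp
          · intro S hS
            congr 1
            rw [Finset.card_compl, Fintype.card_fin]
      _ = if Finset.image f Finset.univ = Finset.univ then (1 : F) else 0 := by
          have hz : ((∑ U ∈ (Finset.image f Finset.univ)ᶜ.powerset, (-1 : ℤ) ^ U.card : ℤ) : F)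
              = ∑ U ∈ (Finset.image f Finset.univ)ᶜ.powerset, (-1 : F) ^ U.card := by
            push_cast
            rfl
          rw [← hz, Finset.sum_powerset_neg_one_pow_card]
          simp [Finset.compl_eq_empty_iff, apply_ite (Int.cast : ℤ → F)]
  -- reduce the sum over functions to surjective (hence bijective) ones, and then to id
  have step3 : T = ∑ f ∈ (Finset.univ : Finset (Fin k → Fin k)).filter
      (fun f => Finset.image f Finset.univ = Finset.univ), D f := by
    rw [step2, Finset.sum_filter]
    refine Finset.sum_congr rfl fun f _ => ?_
    rw [hcoef f, ite_mul, one_mul, zero_mul]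
  have honly : ∀ f ∈ (Finset.univ : Finset (Fin k → Fin k)).filter
      (fun f => Finset.image f Finset.univ = Finset.univ), f ≠ id → D f = 0 := by
    intro f hf hne
    have hsurj : Function.Surjective f := by
      intro y
      have hy : y ∈ Finset.image f Finset.univ := by
        rw [(Finset.mem_filter.mp hf).2]; exact Finset.mem_univ y
      obtain ⟨x, _, hx⟩ := Finset.mem_image.mp hy
      exact ⟨x, hx⟩
    have hinj : Function.Injective f := (Finite.surjective_iff_bijective.mp hsurj).1
    have hex : ∃ j, ¬ f j ≤ j := by
      by_contra hle
      push_neg at hle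
      exact hne (funext (meshulam_inj_eq_id f hinj hle))
    obtain ⟨j, hj⟩ := hex
    have hjlt : j < f j := lt_of_not_ge hj
    have hzero : (fun j' => A (f j') j') j = 0 := by
      funext l
      exact hrow (f j) j l hjlt
    exact (Matrix.detRowAlternating (R := F) (n := Fin k)).map_coord_zero j hzero
  have hid : id ∈ (Finset.univ : Finset (Fin k → Fin k)).filter
      (fun f => Finset.image f Finset.univ = Finset.univ) := by
    simp
  have step4 : T = D id := by
    rw [step3]
    exact Finset.sum_eq_single_of_mem id hid honly
  -- compute D id : it is a "triangular" determinant
  have hDid : D id = ∑ σ : Equiv.Perm (Fin k),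
      Equiv.Perm.sign σ • ∏ l, B (σ l) (r (σ l)) (c l) := by
    have : D id = (Matrix.of fun j l => B j (r j) (c l)).det := rfl
    rw [this, Matrix.det_apply]
    simp only [Matrix.of_apply]
  have hDid2 : D id = ∏ l, B l (r l) (c l) := by
    rw [hDid]
    rw [Finset.sum_eq_single (1 : Equiv.Perm (Fin k))]
    · simp
    · intro σ _ hσ
      have hex : ∃ l, c l < c (σ l) := by
        by_contra hno
        push_neg at hno
        have hle : ∀ l, (fun x => ((c x : ℕ))) (σ l) ≤ (fun x => ((c x : ℕ))) l :=
          fun l => by simpa using hno l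
        have hfix := meshulam_perm_fix σ (fun x => ((c x : ℕ))) hle
        exact hσ (Equiv.ext fun l => hc (Fin.ext (hfix l)))
      obtain ⟨l, hl⟩ := hex
      have : ∏ l', B (σ l') (r (σ l')) (c l') = 0 :=
        Finset.prod_eq_zero (Finset.mem_univ l) (hcol (σ l) l hl)
      rw [this, smul_zero]
    · intro h
      exact absurd (Finset.mem_univ _) h
  have hne : D id ≠ 0 := by
    rw [hDid2]
    exact Finset.prod_ne_zero_iff.mpr fun i _ => hdiag i
  rw [← step4, hT0] at hne
  exact hne rfl

/-- König's theorem, in the form we need: if every cover of `S` by rows and columns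
uses at least `k` lines, then `S` contains `k` positions with strictly increasing
first coordinates and pairwise distinct second coordinates. -/
lemma meshulam_konig {N M : ℕ} (S : Finset (Fin N × Fin M))
    (hcov : ∀ (R : Finset (Fin N)) (C : Finset (Fin M)),
      (∀ p ∈ S, p.1 ∈ R ∨ p.2 ∈ C) → k ≤ R.card + C.card) :
    ∃ p : Fin k → Fin N × Fin M, (∀ i, p i ∈ S) ∧
      StrictMono (fun i => (p i).1) ∧ Function.Injective (fun i => (p i).2) := by
  classical
  -- minimum cover
  have hex : ∃ n : ℕ, ∃ R : Finset (Fin N), ∃ C : Finset (Fin M),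
      (∀ p ∈ S, p.1 ∈ R ∨ p.2 ∈ C) ∧ R.card + C.card = n :=
    ⟨_, Finset.univ, ∅, fun p _ => Or.inl (Finset.mem_univ _), rfl⟩
  set τ := Nat.find hex with hτdef
  obtain ⟨R₀, C₀, hcover₀, hτ⟩ := Nat.find_spec hex
  have hmin : ∀ (R : Finset (Fin N)) (C : Finset (Fin M)),
      (∀ p ∈ S, p.1 ∈ R ∨ p.2 ∈ C) → τ ≤ R.card + C.card :=
    fun R C h => Nat.find_min' hex ⟨R, C, h, rfl⟩
  have hkτ : k ≤ τ := by rw [hτdef, ← hτ]; exact hcov R₀ C₀ hcover₀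
  -- Hall for the rows of the minimum cover
  have hall1 : ∀ A : Finset {x // x ∈ R₀},
      A.card ≤ (A.biUnion (fun i => Finset.univ.filter
        (fun j => ((i : Fin N), j) ∈ S ∧ j ∉ C₀))).card := by
    intro A
    by_contra hA
    push_neg at hA
    set tA := A.biUnion (fun i => Finset.univ.filter
        (fun j => ((i : Fin N), j) ∈ S ∧ j ∉ C₀)) with htA
    have hcov' : ∀ p ∈ S, p.1 ∈ R₀ \ (A.image Subtype.val) ∨ p.2 ∈ C₀ ∪ tA := by
      intro p hp
      by_cases hC : p.2 ∈ C₀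
      · exact Or.inr (Finset.mem_union_left _ hC)
      rcases hcover₀ p hp with h | h
      · by_cases hpA : p.1 ∈ A.image Subtype.val
        · obtain ⟨a, haA, ha⟩ := Finset.mem_image.mp hpA
          refine Or.inr (Finset.mem_union_right _ ?_)
          refine Finset.mem_biUnion.mpr ⟨a, haA, ?_⟩
          simp only [Finset.mem_filter, Finset.mem_univ, true_and]
          refine ⟨?_, hC⟩
          rw [ha]
          simpa using hp
        · exact Or.inl (Finset.mem_sdiff.mpr ⟨h, hpA⟩)
      · exact absurd h hC
    have hle := hmin _ _ hcov'
    have h1 : (A.image Subtype.val).card = A.card :=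
      Finset.card_image_of_injective _ Subtype.val_injective
    have h2 : A.image Subtype.val ⊆ R₀ := by
      intro x hx
      obtain ⟨a, _, ha⟩ := Finset.mem_image.mp hx
      exact ha ▸ a.2
    have h3 : (R₀ \ A.image Subtype.val).card = R₀.card - A.card := by
      rw [Finset.card_sdiff_of_subset h2, h1]
    have h4 : (C₀ ∪ tA).card ≤ C₀.card + tA.card := Finset.card_union_le _ _
    have h5 : A.card ≤ R₀.card := h1 ▸ Finset.card_le_card h2
    omega
  obtain ⟨f, hfinj, hf⟩ :=
    (Finset.all_card_le_biUnion_card_iff_exists_injective _).mp hall1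
  have hfS : ∀ i : {x // x ∈ R₀}, ((i : Fin N), f i) ∈ S ∧ f i ∉ C₀ := by
    intro i
    have := hf i
    simpa using this
  -- Hall for the columns of the minimum cover
  have hall2 : ∀ A : Finset {y // y ∈ C₀},
      A.card ≤ (A.biUnion (fun j => Finset.univ.filter
        (fun i => (i, (j : Fin M)) ∈ S ∧ i ∉ R₀))).card := by
    intro A
    by_contra hA
    push_neg at hA
    set tA := A.biUnion (fun j => Finset.univ.filter
        (fun i => (i, (j : Fin M)) ∈ S ∧ i ∉ R₀)) with htA
    have hcov' : ∀ p ∈ S, p.1 ∈ R₀ ∪ tA ∨ p.2 ∈ C₀ \ (A.image Subtype.val) := by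
      intro p hp
      by_cases hR : p.1 ∈ R₀
      · exact Or.inl (Finset.mem_union_left _ hR)
      rcases hcover₀ p hp with h | h
      · exact absurd h hR
      · by_cases hpA : p.2 ∈ A.image Subtype.val
        · obtain ⟨a, haA, ha⟩ := Finset.mem_image.mp hpA
          refine Or.inl (Finset.mem_union_right _ ?_)
          refine Finset.mem_biUnion.mpr ⟨a, haA, ?_⟩
          simp only [Finset.mem_filter, Finset.mem_univ, true_and]
          refine ⟨?_, hR⟩
          rw [ha]
          simpa using hp
        · exact Or.inr (Finset.mem_sdiff.mpr ⟨h, hpA⟩)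
    have hle := hmin _ _ hcov'
    have h1 : (A.image Subtype.val).card = A.card :=
      Finset.card_image_of_injective _ Subtype.val_injective
    have h2 : A.image Subtype.val ⊆ C₀ := by
      intro x hx
      obtain ⟨a, _, ha⟩ := Finset.mem_image.mp hx
      exact ha ▸ a.2
    have h3 : (C₀ \ A.image Subtype.val).card = C₀.card - A.card := by
      rw [Finset.card_sdiff_of_subset h2, h1]
    have h4 : (R₀ ∪ tA).card ≤ R₀.card + tA.card := Finset.card_union_le _ _
    have h5 : A.card ≤ C₀.card := h1 ▸ Finset.card_le_card h2
    omega
  obtain ⟨g, hginj, hg⟩ :=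
    (Finset.all_card_le_biUnion_card_iff_exists_injective _).mp hall2
  have hgS : ∀ j : {y // y ∈ C₀}, (g j, (j : Fin M)) ∈ S ∧ g j ∉ R₀ := by
    intro j
    have := hg j
    simpa using this
  -- the combined matching, as a Finset of positions
  set P₁ : Finset (Fin N × Fin M) :=
    Finset.image (fun i : {x // x ∈ R₀} => ((i : Fin N), f i)) R₀.attach with hP₁
  set P₂ : Finset (Fin N × Fin M) :=
    Finset.image (fun j : {y // y ∈ C₀} => (g j, (j : Fin M))) C₀.attach with hP₂
  set P := P₁ ∪ P₂ with hP
  have hP₁mem : ∀ q ∈ P₁, ∃ i : {x // x ∈ R₀}, q = ((i : Fin N), f i) := by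
    intro q hq
    obtain ⟨i, _, hi⟩ := Finset.mem_image.mp hq
    exact ⟨i, hi.symm⟩
  have hP₂mem : ∀ q ∈ P₂, ∃ j : {y // y ∈ C₀}, q = (g j, (j : Fin M)) := by
    intro q hq
    obtain ⟨j, _, hj⟩ := Finset.mem_image.mp hq
    exact ⟨j, hj.symm⟩
  have hPS : ∀ q ∈ P, q ∈ S := by
    intro q hq
    rcases Finset.mem_union.mp hq with h | h
    · obtain ⟨i, rfl⟩ := hP₁mem q h
      exact (hfS i).1
    · obtain ⟨j, rfl⟩ := hP₂mem q h
      exact (hgS j).1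
  have hfst1 : ∀ q ∈ P₁, q.1 ∈ R₀ := by
    intro q hq; obtain ⟨i, rfl⟩ := hP₁mem q hq; exact i.2
  have hfst2 : ∀ q ∈ P₂, q.1 ∉ R₀ := by
    intro q hq; obtain ⟨j, rfl⟩ := hP₂mem q hq; exact (hgS j).2
  have hsnd1 : ∀ q ∈ P₁, q.2 ∉ C₀ := by
    intro q hq; obtain ⟨i, rfl⟩ := hP₁mem q hq; exact (hfS i).2
  have hsnd2 : ∀ q ∈ P₂, q.2 ∈ C₀ := by
    intro q hq; obtain ⟨j, rfl⟩ := hP₂mem q hq; exact j.2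
  have hinjfst : Set.InjOn Prod.fst (P : Set (Fin N × Fin M)) := by
    intro q hq q' hq' h
    rcases Finset.mem_union.mp hq with h1 | h1 <;> rcases Finset.mem_union.mp hq' with h2 | h2
    · obtain ⟨i, rfl⟩ := hP₁mem q h1
      obtain ⟨i', rfl⟩ := hP₁mem q' h2
      have : i = i' := Subtype.ext h
      rw [this]
    · exact absurd (h ▸ hfst1 q h1) (hfst2 q' h2)
    · exact absurd (h ▸ hfst2 q h1) (fun hn => hn (hfst1 q' h2))
    · obtain ⟨j, rfl⟩ := hP₂mem q h1
      obtain ⟨j', rfl⟩ := hP₂mem q' h2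
      have : j = j' := hginj h
      rw [this]
  have hinjsnd : Set.InjOn Prod.snd (P : Set (Fin N × Fin M)) := by
    intro q hq q' hq' h
    rcases Finset.mem_union.mp hq with h1 | h1 <;> rcases Finset.mem_union.mp hq' with h2 | h2
    · obtain ⟨i, rfl⟩ := hP₁mem q h1
      obtain ⟨i', rfl⟩ := hP₁mem q' h2
      have : i = i' := hfinj h
      rw [this]
    · exact absurd (h ▸ hsnd2 q' h2) (hsnd1 q h1)
    · exact absurd (h ▸ hsnd2 q h1) (hsnd1 q' h2)
    · obtain ⟨j, rfl⟩ := hP₂mem q h1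
      obtain ⟨j', rfl⟩ := hP₂mem q' h2
      have : j = j' := Subtype.ext h
      rw [this]
  have hdisj : Disjoint P₁ P₂ := by
    rw [Finset.disjoint_left]
    intro q hq1 hq2
    exact hfst2 q hq2 (hfst1 q hq1)
  have hcard1 : P₁.card = R₀.card := by
    rw [hP₁, Finset.card_image_of_injective, Finset.card_attach]
    intro a b hab
    exact Subtype.ext (congrArg Prod.fst hab)
  have hcard2 : P₂.card = C₀.card := by
    rw [hP₂, Finset.card_image_of_injective, Finset.card_attach]
    intro a b hab
    exact Subtype.ext (congrArg Prod.snd hab)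
  have hcardP : P.card = τ := by
    rw [hP, Finset.card_union_of_disjoint hdisj, hcard1, hcard2, hτ]
  -- enumerate the rows of P in increasing order
  set Rs := P.image Prod.fst with hRs
  have hRscard : Rs.card = τ := by
    rw [hRs, Finset.card_image_of_injOn hinjfst, hcardP]
  have hk' : k ≤ Rs.card := hRscard ▸ hkτ
  set e := Rs.orderIsoOfFin rfl with he
  have hpick : ∀ x : {x // x ∈ Rs}, ∃ q, q ∈ P ∧ q.1 = (x : Fin N) := by
    intro x
    obtain ⟨q, hq, hq1⟩ := Finset.mem_image.mp x.2
    exact ⟨q, hq, hq1⟩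
  choose pick hpickP hpick1 using hpick
  refine ⟨fun i => pick (e (Fin.castLE hk' i)), fun i => hPS _ (hpickP _), ?_, ?_⟩
  · intro i i' hii'
    have h1 : (pick (e (Fin.castLE hk' i))).1 = ((e (Fin.castLE hk' i) : Fin N)) := hpick1 _
    have h2 : (pick (e (Fin.castLE hk' i'))).1 = ((e (Fin.castLE hk' i') : Fin N)) := hpick1 _
    show (pick (e (Fin.castLE hk' i))).1 < (pick (e (Fin.castLE hk' i'))).1
    rw [h1, h2]
    have hlt : Fin.castLE hk' i < Fin.castLE hk' i' := by
      rw [Fin.lt_def] at hii' ⊢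
      exact hii'
    exact e.strictMono hlt
  · intro i i' hii'
    have heq : pick (e (Fin.castLE hk' i)) = pick (e (Fin.castLE hk' i')) :=
      hinjsnd (hpickP _) (hpickP _) hii'
    have : ((e (Fin.castLE hk' i) : Fin N)) = ((e (Fin.castLE hk' i') : Fin N)) := by
      rw [← hpick1 (e (Fin.castLE hk' i)), ← hpick1 (e (Fin.castLE hk' i')), heq]
    have : e (Fin.castLE hk' i) = e (Fin.castLE hk' i') := Subtype.ext this
    have hcl := e.injective this
    have hv : (Fin.castLE hk' i).val = (Fin.castLE hk' i').val := congrArg Fin.val hcl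
    exact Fin.ext (by simpa using hv)


end Aux

/-- Meshulam's covering theorem: let 𝓑 be a nonempty finite set of nonzero matrices,
`ini B` the lexicographically least position of a nonzero entry of each `B ∈ 𝓑`, and
suppose every cover of the set of initial positions of members of 𝓑 by rows R and
columns Cc uses at least k lines. Then the F-linear span of 𝓑 contains a matrix of
rank at least k. -/
theorem meshulam_covering {F : Type*} [Field F] {N M : ℕ}
    (𝓑 : Finset (Matrix (Fin N) (Fin M) F)) (h𝓑 : 𝓑.Nonempty)
    (h0 : ∀ B ∈ 𝓑, B ≠ 0)
    (ini : Matrix (Fin N) (Fin M) F → Fin N × Fin M)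
    (hini : ∀ B ∈ 𝓑, B (ini B).1 (ini B).2 ≠ 0 ∧
      ∀ p : Fin N × Fin M, B p.1 p.2 ≠ 0 → toLex (ini B) ≤ toLex p)
    (k : ℕ)
    (hcover : ∀ (R : Finset (Fin N)) (Cc : Finset (Fin M)),
      (∀ B ∈ 𝓑, (ini B).1 ∈ R ∨ (ini B).2 ∈ Cc) → k ≤ R.card + Cc.card) :
    ∃ Z ∈ Submodule.span F (𝓑 : Set (Matrix (Fin N) (Fin M) F)), k ≤ Z.rank := by
  classical
  -- apply König to the set of initial positions
  obtain ⟨p, hpS, hpfst, hpsnd⟩ := meshulam_konig (k := k) (𝓑.image ini) (by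
    intro R C h
    refine hcover R C fun B hB => ?_
    exact h (ini B) (Finset.mem_image_of_mem ini hB))
  -- choose witnesses
  have hw : ∀ i : Fin k, ∃ B ∈ 𝓑, ini B = p i := by
    intro i
    obtain ⟨B, hB, hBi⟩ := Finset.mem_image.mp (hpS i)
    exact ⟨B, hB, hBi⟩
  choose B hB hBini using hw
  set r : Fin k → Fin N := fun i => (p i).1 with hrdef
  set c : Fin k → Fin M := fun i => (p i).2 with hcdef
  have hr : StrictMono r := hpfst
  have hc : Function.Injective c := hpsnd
  have hdiag : ∀ i, B i (r i) (c i) ≠ 0 := by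
    intro i
    have := (hini (B i) (hB i)).1
    rwa [hBini i] at this
  have hlex : ∀ i (x : Fin N) (y : Fin M), B i x y ≠ 0 →
      r i < x ∨ (r i = x ∧ c i ≤ y) := by
    intro i x y hxy
    have := (hini (B i) (hB i)).2 (x, y) hxy
    rw [hBini i] at this
    exact Prod.Lex.le_iff.mp this
  have hrow : ∀ i j l, j < i → B i (r j) (c l) = 0 := by
    intro i j l hji
    by_contra hne
    rcases hlex i (r j) (c l) hne with h | ⟨h, _⟩
    · exact absurd (hr hji) (not_lt.mpr h.le)
    · exact absurd (hr hji) (not_lt.mpr h.le)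
  have hcol : ∀ i l, c l < c i → B i (r i) (c l) = 0 := by
    intro i l hlt
    by_contra hne
    rcases hlex i (r i) (c l) hne with h | ⟨_, h⟩
    · exact lt_irrefl _ h
    · exact absurd hlt (not_lt.mpr h)
  obtain ⟨S₀, hS₀⟩ := meshulam_key B r c hr hc hdiag hrow hcol
  refine ⟨∑ i ∈ S₀, B i, ?_, ?_⟩
  · exact Submodule.sum_mem _ fun i _ => Submodule.subset_span (Finset.mem_coe.mpr (hB i))
  · -- rank bound via the invertible k×k submatrix
    set Z := ∑ i ∈ S₀, B i with hZ
    have hunit : IsUnit (Z.submatrix r c) :=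
      (Matrix.isUnit_iff_isUnit_det _).mpr (isUnit_iff_ne_zero.mpr hS₀)
    have hrank1 : (Z.submatrix r c).rank = k := by
      rw [Matrix.rank_of_isUnit _ hunit, Fintype.card_fin]
    have hfac : Z.submatrix r c =
        ((1 : Matrix (Fin N) (Fin N) F).submatrix r (Equiv.refl (Fin N))) * Z *
          ((1 : Matrix (Fin M) (Fin M) F).submatrix (Equiv.refl (Fin M)) c) := by
      rw [Matrix.mul_submatrix_one, Matrix.one_submatrix_mul]
      simp
    calc k = (Z.submatrix r c).rank := hrank1.symm
      _ ≤ Z.rank := by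
          rw [hfac]
          exact le_trans (Matrix.rank_mul_le_left _ _)
            (Matrix.rank_mul_le_right _ _)
end

section
/- Singleton bound for the sum-rank metric: suppose n_i ≤ m_i for all i and m_1 ≥ … ≥ m_t. Let C ⊆ Π = ⊕_{i=1}^t F_q^{n_i × m_i} with |C| ≥ 2 and minimum sum-rank distance d, and let j, δ be the unique integers with d − 1 = Σ_{i=1}^{j−1} n_i + δ, 0 ≤ δ ≤ n_j − 1. Then |C| ≤ q^{Σ_{i=j}^t m_i n_i − m_j δ}. -/
open Finset

/-- A matrix whose rows of index `≥ δ` all vanish has rank at most `δ`. -/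
lemma rank_le_of_rows_zero {F : Type*} [Field F] {a b δ : ℕ}
    (M : Matrix (Fin a) (Fin b) F) (h : ∀ r : Fin a, δ ≤ (r : ℕ) → M r = 0) :
    M.rank ≤ δ := by
  classical
  rw [Matrix.rank_eq_finrank_span_row]
  set v : Fin δ → (Fin b → F) := fun r => if h' : (r : ℕ) < a then M ⟨r, h'⟩ else 0 with hv
  have hsub : Set.range M ⊆ insert 0 (Set.range v) := by
    rintro _ ⟨r, rfl⟩
    by_cases hr : (r : ℕ) < δ
    · exact Set.mem_insert_iff.mpr (Or.inr ⟨⟨r, hr⟩, by simp [hv, r.isLt]⟩)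
    · exact Set.mem_insert_iff.mpr (Or.inl (h r (le_of_not_gt hr)))
  calc Module.finrank F (Submodule.span F (Set.range M))
      ≤ Module.finrank F (Submodule.span F (insert 0 (Set.range v))) :=
        Submodule.finrank_mono (Submodule.span_mono hsub)
    _ = Module.finrank F (Submodule.span F (Set.range v)) := by
        rw [Submodule.span_insert_zero]
    _ ≤ Fintype.card (Fin δ) := finrank_range_le_card v
    _ = δ := Fintype.card_fin δ

/-- Singleton bound for the sum-rank metric: with n_i ≤ m_i and m_1 ≥ … ≥ m_t, if
C ⊆ ⊕ F_q^{n_i × m_i} has |C| ≥ 2 and minimum sum-rank distance d, and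
d − 1 = Σ_{i<j} n_i + δ with 0 ≤ δ ≤ n_j − 1, then |C| ≤ q^{Σ_{i≥j} m_i n_i − m_j δ}. -/
theorem singleton_bound {F : Type*} [Field F] [Fintype F] {t : ℕ}
    (n m : Fin t → ℕ) (hn : ∀ i, 1 ≤ n i) (hnm : ∀ i, n i ≤ m i) (hm : Antitone m)
    (d : ℕ) (hd : 1 ≤ d)
    (C : Set (∀ i : Fin t, Matrix (Fin (n i)) (Fin (m i)) F))
    (hC2 : 2 ≤ Nat.card C)
    (hCd : ∀ X ∈ C, ∀ Y ∈ C, X ≠ Y → d ≤ srk (X - Y))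
    (hCeq : ∃ X ∈ C, ∃ Y ∈ C, X ≠ Y ∧ srk (X - Y) = d)
    (j : Fin t) (δ : ℕ) (hδ : δ ≤ n j - 1)
    (hdj : d - 1 = ∑ i ∈ univ.filter (· < j), n i + δ) :
    Nat.card C ≤
      Fintype.card F ^ (∑ i ∈ univ.filter (fun i => j ≤ i), m i * n i - m j * δ) := by
  classical
  have hδlt : δ < n j := by have := hn j; omega
  -- the number of rows kept in each block
  set k : Fin t → ℕ := fun i => if i < j then 0 else n i - (if i = j then δ else 0) with hkdef
  have hk : ∀ i (r : Fin (k i)), (r : ℕ) + (if i = j then δ else 0) < n i := by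
    intro i r
    have hr := r.isLt
    by_cases h1 : i < j
    · simp only [hkdef, if_pos h1] at hr; omega
    · simp only [hkdef, if_neg h1] at hr
      by_cases h2 : i = j
      · simp only [if_pos h2] at hr ⊢; subst h2; omega
      · simp only [if_neg h2] at hr ⊢; omega
  set D := ∀ i : Fin t, Fin (k i) → Fin (m i) → F with hD
  let f : C → D := fun X i r c => X.1 i ⟨(r : ℕ) + (if i = j then δ else 0), hk i r⟩ c
  -- injectivity
  have hf : Function.Injective f := by
    intro X Y hXY
    by_contra hne
    have hne' : X.1 ≠ Y.1 := fun h => hne (Subtype.ext h)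
    have hub : srk (X.1 - Y.1) ≤ d - 1 := by
      have hbd : ∀ i : Fin t, ((X.1 - Y.1) i).rank ≤
          (if i < j then n i else if i = j then δ else 0) := by
        intro i
        by_cases h1 : i < j
        · simpa [if_pos h1] using (Matrix.rank_le_card_height ((X.1 - Y.1) i)).trans
            (le_of_eq (Fintype.card_fin (n i)))
        · by_cases h2 : i = j
          · simp only [if_neg h1, if_pos h2]
            refine rank_le_of_rows_zero _ (fun r hr => ?_)
            funext c
            have hrk : (r : ℕ) - δ < k i := by
              simp only [hkdef, if_neg h1, if_pos h2]
              have := r.isLt; omega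
            have hthis := congrFun (congrFun (congrFun hXY i) ⟨(r : ℕ) - δ, hrk⟩) c
            simp only [f] at hthis
            have hfin : (⟨((⟨(r : ℕ) - δ, hrk⟩ : Fin (k i)) : ℕ) + (if i = j then δ else 0),
                hk i ⟨(r : ℕ) - δ, hrk⟩⟩ : Fin (n i)) = r := by
              ext; simp only [if_pos h2]; omega
            rw [hfin] at hthis
            simp [hthis]
          · simp only [if_neg h1, if_neg h2]
            have hz : (X.1 - Y.1) i = 0 := by
              funext r c
              have hrk : (r : ℕ) < k i := by
                simp only [hkdef, if_neg h1, if_neg h2]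
                have := r.isLt; omega
              have hthis := congrFun (congrFun (congrFun hXY i) ⟨(r : ℕ), hrk⟩) c
              simp only [f] at hthis
              have hfin : (⟨((⟨(r : ℕ), hrk⟩ : Fin (k i)) : ℕ) + (if i = j then δ else 0),
                  hk i ⟨(r : ℕ), hrk⟩⟩ : Fin (n i)) = r := by
                ext; simp only [if_neg h2]; omega
              rw [hfin] at hthis
              simp [hthis]
            rw [hz, Matrix.rank_zero]
      calc srk (X.1 - Y.1) ≤ ∑ i, (if i < j then n i else if i = j then δ else 0) :=
            Finset.sum_le_sum (fun i _ => hbd i)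
        _ = d - 1 := by
            rw [← Finset.sum_filter_add_sum_filter_not univ (· < j)]
            have h1 : ∑ i ∈ univ.filter (· < j),
                (if i < j then n i else if i = j then δ else 0)
                = ∑ i ∈ univ.filter (· < j), n i := by
              refine Finset.sum_congr rfl (fun i hi => ?_)
              rw [if_pos (Finset.mem_filter.mp hi).2]
            have h2 : ∑ i ∈ univ.filter (fun i => ¬ i < j),
                (if i < j then n i else if i = j then δ else 0)
                = δ := by
              rw [Finset.sum_congr rfl (fun i hi => if_neg (Finset.mem_filter.mp hi).2)]
              rw [Finset.sum_ite_eq' _ j (fun _ => δ)]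
              simp
            rw [h1, h2, hdj]
    have := hCd X.1 X.2 Y.1 Y.2 hne'
    omega
  -- counting
  have hcard : Nat.card C ≤ Nat.card D := Nat.card_le_card_of_injective f hf
  have hDcard : Nat.card D = Fintype.card F ^ (∑ i, m i * k i) := by
    have h0 : Nat.card D = ∏ i, Nat.card (Fin (k i) → Fin (m i) → F) := Nat.card_pi
    rw [h0, ← Finset.prod_pow_eq_pow_sum]
    refine Finset.prod_congr rfl (fun i _ => ?_)
    simp [Nat.card_eq_fintype_card, Fintype.card_fun, ← pow_mul, mul_comm]
  have hexp : ∑ i, m i * k i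
      = ∑ i ∈ univ.filter (fun i => j ≤ i), m i * n i - m j * δ := by
    rw [← Finset.sum_filter_add_sum_filter_not univ (· < j)]
    have h1 : ∑ i ∈ univ.filter (· < j), m i * k i = 0 := by
      refine Finset.sum_eq_zero (fun i hi => ?_)
      simp [hkdef, (Finset.mem_filter.mp hi).2]
    have hfeq : univ.filter (fun i => ¬ i < j) = univ.filter (fun i => j ≤ i) := by
      ext i; simp [not_lt]
    have hins : univ.filter (fun i : Fin t => j ≤ i)
        = insert j (univ.filter (fun i => j < i)) := by
      ext i
      simp only [Finset.mem_filter, Finset.mem_univ, true_and, Finset.mem_insert]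
      constructor
      · intro h; rcases eq_or_lt_of_le h with h | h
        · exact Or.inl h.symm
        · exact Or.inr h
      · rintro (rfl | h)
        · exact le_refl _
        · exact le_of_lt h
    have hjni : j ∉ univ.filter (fun i : Fin t => j < i) := by simp
    rw [h1, hfeq, zero_add, hins, Finset.sum_insert hjni, Finset.sum_insert hjni]
    have hkj : k j = n j - δ := by simp [hkdef]
    have hT : ∑ i ∈ univ.filter (fun i => j < i), m i * k i
        = ∑ i ∈ univ.filter (fun i => j < i), m i * n i := by
      refine Finset.sum_congr rfl (fun i hi => ?_)
      have hij : j < i := (Finset.mem_filter.mp hi).2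
      have h1 : ¬ i < j := by exact not_lt_of_gt hij
      have h2 : i ≠ j := ne_of_gt hij
      simp [hkdef, h1, h2]
    rw [hkj, hT]
    have hle : m j * δ ≤ m j * n j := Nat.mul_le_mul_left _ (le_of_lt hδlt)
    rw [Nat.mul_sub_left_distrib]
    omega
  calc Nat.card C ≤ Nat.card D := hcard
    _ = _ := by rw [hDcard, hexp]
end

section
/- Over any field F with |F| ≥ 3, every linear subspace A ≤ F^t in which every vector has Hamming weight at most r and which has dimension r (the maximum possible) is a coordinate subspace: there exists a subset I ⊆ {1,…,t} with |I| = r such that A = {x ∈ F^t : x_i = 0 for all i ∉ I}. -/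
/-- Over a field with at least 3 elements, every linear r-anticode for the Hamming
metric in F^t of the maximal dimension r is a coordinate subspace: there is an
r-element set I of coordinates such that A = {x : x_i = 0 for all i ∉ I}. -/
theorem optimal_hamming_anticode {F : Type*} [Field F] [DecidableEq F]
    (h3 : ∃ a b c : F, a ≠ b ∧ a ≠ c ∧ b ≠ c)
    (t r : ℕ) (A : Submodule F (Fin t → F))
    (hw : ∀ x ∈ A, hammingNorm x ≤ r)
    (hdim : Module.finrank F A = r) :
    ∃ I : Finset (Fin t), I.card = r ∧
      (A : Set (Fin t → F)) = {x | ∀ i ∉ I, x i = 0} := by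
  classical
  -- there is an element e with e ≠ 0 and 1 + e ≠ 0
  obtain ⟨e, he0, he1⟩ : ∃ e : F, e ≠ 0 ∧ 1 + e ≠ 0 := by
    obtain ⟨a, b, c, hab, hac, hbc⟩ := h3
    by_contra h
    push_neg at h
    have key : ∀ x : F, x ≠ 0 → x = -1 := by
      intro x hx
      have := h x hx
      linear_combination this
    rcases eq_or_ne a 0 with h1 | h1 <;> rcases eq_or_ne b 0 with h2 | h2 <;>
      rcases eq_or_ne c 0 with h3' | h3'
    · exact hab (h1.trans h2.symm)
    · exact hab (h1.trans h2.symm)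
    · exact hac (h1.trans h3'.symm)
    · exact hbc ((key b h2).trans (key c h3').symm)
    · exact hbc (h2.trans h3'.symm)
    · exact hac ((key a h1).trans (key c h3').symm)
    · exact hab ((key a h1).trans (key b h2).symm)
    · exact hab ((key a h1).trans (key b h2).symm)
  -- a minimal separating set of coordinates
  have hexists : ∃ n : ℕ, ∃ P : Finset (Fin t),
      (∀ x ∈ A, (∀ p ∈ P, x p = 0) → x = 0) ∧ P.card = n := by
    refine ⟨_, Finset.univ, ?_, rfl⟩
    intro x _ hx
    funext i
    exact hx i (Finset.mem_univ i)
  obtain ⟨P, hP, hPcard⟩ := Nat.find_spec hexists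
  have hmin : ∀ Q : Finset (Fin t),
      (∀ x ∈ A, (∀ p ∈ Q, x p = 0) → x = 0) → P.card ≤ Q.card := by
    intro Q hQ
    rw [hPcard]
    exact Nat.find_min' hexists ⟨Q, hQ, rfl⟩
  -- for each p ∈ P, a vector g p ∈ A with g p p = 1 and g p q = 0 for q ∈ P \ {p}
  have hgex : ∀ p ∈ P, ∃ g, g ∈ A ∧ g p = 1 ∧ ∀ q ∈ P, q ≠ p → g q = 0 := by
    intro p hp
    have hne : ¬ ∀ x ∈ A, (∀ q ∈ P.erase p, x q = 0) → x = 0 := by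
      intro h
      have h1 := hmin _ h
      have h2 := Finset.card_erase_lt_of_mem hp
      omega
    push_neg at hne
    obtain ⟨x, hxA, hx0, hxne⟩ := hne
    have hxp : x p ≠ 0 := by
      intro h
      refine hxne (hP x hxA fun q hq => ?_)
      rcases eq_or_ne q p with rfl | hqp
      · exact h
      · exact hx0 q (Finset.mem_erase.mpr ⟨hqp, hq⟩)
    refine ⟨(x p)⁻¹ • x, A.smul_mem _ hxA, by simp [inv_mul_cancel₀ hxp], ?_⟩
    intro q hq hqp
    simp [hx0 q (Finset.mem_erase.mpr ⟨hqp, hq⟩)]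
  choose! g hgA hg1 hg0 using hgex
  -- r ≤ |P| : projection to P-coordinates is injective on A
  have hrle : r ≤ P.card := by
    rw [← hdim]
    have hinj : Function.Injective
        ((LinearMap.funLeft F F (fun p : ↥P => (p : Fin t))).comp A.subtype) := by
      intro x y hxy
      have hco : ∀ p ∈ P, (x : Fin t → F) p = (y : Fin t → F) p := by
        intro p hp
        have := congrFun hxy (⟨p, hp⟩ : ↥P)
        simpa [LinearMap.funLeft] using this
      have hsub : ((x : Fin t → F) - y) ∈ A := A.sub_mem x.2 y.2
      have h0 : ((x : Fin t → F) - y) = 0 :=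
        hP _ hsub fun p hp => by simp [hco p hp]
      exact Subtype.ext (sub_eq_zero.mp h0)
    calc Module.finrank F A ≤ Module.finrank F (↥P → F) :=
          LinearMap.finrank_le_finrank_of_injective hinj
      _ = P.card := by
          rw [Module.finrank_fintype_fun_eq_card, Fintype.card_coe]
  -- the sum z of all g p has coordinate 1 at each p ∈ P
  set z : Fin t → F := ∑ p ∈ P, g p with hzdef
  have hzA : z ∈ A := Submodule.sum_mem _ fun p hp => hgA p hp
  have hz1 : ∀ p ∈ P, z p = 1 := by
    intro p hp
    rw [hzdef, Finset.sum_apply]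
    rw [Finset.sum_eq_single p (fun q hq hqp => hg0 q hq p hp hqp.symm) (fun h => absurd hp h)]
    exact hg1 p hp
  -- support of z is exactly P
  have hnorm : ∀ v : Fin t → F,
      hammingNorm v = (Finset.univ.filter fun i => v i ≠ 0).card := fun v => rfl
  have hsub : P ⊆ Finset.univ.filter fun i => z i ≠ 0 := by
    intro p hp
    simp only [Finset.mem_filter, Finset.mem_univ, true_and]
    rw [hz1 p hp]
    exact one_ne_zero
  have hzsupp : (Finset.univ.filter fun i => z i ≠ 0) = P := by
    refine (Finset.eq_of_subset_of_card_le hsub ?_).symm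
    calc (Finset.univ.filter fun i => z i ≠ 0).card = hammingNorm z := (hnorm z).symm
      _ ≤ r := hw z hzA
      _ ≤ P.card := hrle
  have hz0 : ∀ q, q ∉ P → z q = 0 := by
    intro q hq
    by_contra h
    exact hq (hzsupp ▸ (Finset.mem_filter.mpr ⟨Finset.mem_univ q, h⟩))
  -- key claim : each g p is supported on P
  have hkey : ∀ p ∈ P, ∀ q, q ∉ P → g p q = 0 := by
    intro p hp q hq
    by_contra hc
    set y : Fin t → F := z + e • g p with hydef
    have hyA : y ∈ A := A.add_mem hzA (A.smul_mem _ (hgA p hp))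
    have hsuby : insert q P ⊆ Finset.univ.filter fun i => y i ≠ 0 := by
      intro i hi
      simp only [Finset.mem_filter, Finset.mem_univ, true_and]
      rcases Finset.mem_insert.mp hi with rfl | hiP
      · rw [hydef]
        simp only [Pi.add_apply, Pi.smul_apply, smul_eq_mul]
        rw [hz0 i hq, zero_add]
        exact mul_ne_zero he0 hc
      · rw [hydef]
        simp only [Pi.add_apply, Pi.smul_apply, smul_eq_mul]
        rw [hz1 i hiP]
        rcases eq_or_ne i p with rfl | hip
        · rw [hg1 i hp, mul_one]
          exact he1
        · rw [hg0 p hp i hiP hip, mul_zero, add_zero]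
          exact one_ne_zero
    have hcard : P.card + 1 ≤ hammingNorm y := by
      calc P.card + 1 = (insert q P).card := (Finset.card_insert_of_notMem hq).symm
        _ ≤ (Finset.univ.filter fun i => y i ≠ 0).card := Finset.card_le_card hsuby
        _ = hammingNorm y := (hnorm y).symm
    have := hw y hyA
    omega
  -- every element of A is a combination of the g p's, hence supported on P
  have hAsupp : ∀ x ∈ A, ∀ q, q ∉ P → x q = 0 := by
    intro x hxA q hq
    have hx'A : (x - ∑ p ∈ P, x p • g p) ∈ A :=
      A.sub_mem hxA (Submodule.sum_mem _ fun p hp => A.smul_mem _ (hgA p hp))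
    have hx'0 : ∀ p ∈ P, (x - ∑ p' ∈ P, x p' • g p') p = 0 := by
      intro p hp
      simp only [Pi.sub_apply, Finset.sum_apply, Pi.smul_apply, smul_eq_mul]
      rw [Finset.sum_eq_single p
        (fun q' hq' hq'p => by rw [hg0 q' hq' p hp hq'p.symm, mul_zero])
        (fun h => absurd hp h)]
      rw [hg1 p hp, mul_one, sub_self]
    have hx'eq : (x - ∑ p ∈ P, x p • g p) = 0 := hP _ hx'A hx'0
    have hx : x = ∑ p ∈ P, x p • g p := sub_eq_zero.mp hx'eq
    rw [hx, Finset.sum_apply]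
    refine Finset.sum_eq_zero fun p hp => ?_
    simp [hkey p hp q hq]
  -- conclusion
  refine ⟨P, le_antisymm ?_ hrle, ?_⟩
  · have h1 : hammingNorm z ≤ r := hw z hzA
    have h2 : P.card ≤ hammingNorm z := by
      rw [hnorm z]
      exact Finset.card_le_card hsub
    omega
  ext x
  simp only [SetLike.mem_coe, Set.mem_setOf_eq]
  constructor
  · intro hxA i hi
    exact hAsupp x hxA i hi
  · intro hx
    have haA : (∑ p ∈ P, x p • g p) ∈ A :=
      Submodule.sum_mem _ fun p hp => A.smul_mem _ (hgA p hp)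
    have hax : (∑ p ∈ P, x p • g p) = x := by
      funext i
      rw [Finset.sum_apply]
      by_cases hiP : i ∈ P
      · rw [Finset.sum_eq_single i
          (fun q' hq' hq'p => by simp [Pi.smul_apply, hg0 q' hq' i hiP hq'p.symm])
          (fun h => absurd hiP h)]
        simp [hg1 i hiP]
      · rw [hx i hiP]
        refine Finset.sum_eq_zero fun p hp => ?_
        simp [hkey p hp i hiP]
    exact hax ▸ haA
end

section
/- For fixed block sizes with n_i ≤ m_i, let K be the maximal dimension of a linear r-anticode in Π = ⊕_{i=1}^t F_q^{n_i × m_i} (so K = max{Σ m_i u_i : u ∈ U_r}), and let ρ = ⌊r/2⌋ with r ≥ 1. Then for all sufficiently large prime powers q, the cardinality V_ρ(Π) of the sum-rank ball of radius ρ is strictly less than q^K. -/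
/-- The Gaussian binomial coefficient [n choose s]_q : the number of s-dimensional
subspaces of F^n (with q = |F|). -/
noncomputable def gbinom (F : Type*) [Field F] (n s : ℕ) : ℕ :=
  Nat.card {U : Submodule F (Fin n → F) // Module.finrank F U = s}

open Finset

open Module in

lemma gbinom_mul_card_le (F : Type) [Field F] [Fintype F] (n s : ℕ) :
    gbinom F n s * Nat.card { v : Fin s → (Fin s → F) // LinearIndependent F v }
      ≤ Fintype.card F ^ (n * s) := by
  classical
  set A := {U : Submodule F (Fin n → F) // Module.finrank F U = s}
  set B := { v : Fin s → (Fin s → F) // LinearIndependent F v }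
  let e : ∀ U : A, (Fin s → F) ≃ₗ[F] U.1 :=
    fun U => LinearEquiv.ofFinrankEq _ _ (by simpa using U.2.symm)
  let f : A × B → (Fin s → (Fin n → F)) := fun p j => ((e p.1) (p.2.1 j) : Fin n → F)
  have hspan : ∀ (U : A) (v : B),
      Submodule.span F (Set.range (f (U, v))) = U.1 := by
    intro U v
    have hli : LinearIndependent F (f (U, v)) := by
      have : f (U, v) = (U.1.subtype.comp (e U).toLinearMap) ∘ v.1 := rfl
      rw [this]
      exact v.2.map' _ (by
        rw [LinearMap.ker_eq_bot]
        exact U.1.injective_subtype.comp (e U).injective)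
    have hle : Submodule.span F (Set.range (f (U, v))) ≤ U.1 := by
      rw [Submodule.span_le]
      rintro x ⟨j, rfl⟩
      exact ((e U) (v.1 j)).2
    refine (Submodule.eq_of_le_of_finrank_le hle ?_)
    rw [finrank_span_eq_card hli, U.2]
    simp
  have hinj : Function.Injective f := by
    rintro ⟨U, v⟩ ⟨W, w⟩ h
    have hUW : U = W := Subtype.ext (by rw [← hspan U v, ← hspan W w]; exact congrArg _ (congrArg _ h))
    subst hUW
    have hvw : v = w := by
      refine Subtype.ext (funext fun j => ?_)
      have hj : ((e U) (v.1 j) : Fin n → F) = ((e U) (w.1 j) : Fin n → F) := congrFun h j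
      exact (e U).injective (Subtype.ext hj)
    rw [hvw]
  have := Nat.card_le_card_of_injective f hinj
  rw [Nat.card_prod] at this
  calc gbinom F n s * Nat.card B = Nat.card A * Nat.card B := rfl
    _ ≤ Nat.card (Fin s → (Fin n → F)) := this
    _ = Fintype.card F ^ (n * s) := by
        simp [Nat.card_eq_fintype_card]; ring

lemma card_li (F : Type) [Field F] [Fintype F] (s : ℕ) :
    Nat.card { v : Fin s → (Fin s → F) // LinearIndependent F v } =
      ∏ j ∈ range s, (Fintype.card F ^ s - Fintype.card F ^ j) := by
  rw [card_linearIndependent (by simp), ← Fin.prod_univ_eq_prod_range]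
  simp


lemma gbinom_le (F : Type) [Field F] [Fintype F] {n s : ℕ} (hs : s ≤ n)
    (hq : 2 ≤ Fintype.card F) :
    gbinom F n s ≤ 2 ^ s * Fintype.card F ^ (s * (n - s)) := by
  set q := Fintype.card F with hqdef
  have hq1 : 1 ≤ q := le_trans (by norm_num) hq
  have hP : (q ^ (s-1) * (q-1)) ^ s ≤ ∏ j ∈ range s, (q ^ s - q ^ j) := by
    have : (q ^ (s-1) * (q-1)) ^ s = ∏ _j ∈ range s, (q ^ (s-1) * (q-1)) := by
      rw [Finset.prod_const, card_range]
    rw [this]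
    refine Finset.prod_le_prod' fun j hj => ?_
    have hjs : j < s := mem_range.mp hj
    have h1 : q ^ j ≤ q ^ (s-1) := Nat.pow_le_pow_right hq1 (by omega)
    have h2 : q ^ (s-1) * (q-1) = q ^ s - q ^ (s-1) := by
      rw [Nat.mul_sub, mul_one, ← pow_succ]
      congr 2
      omega
    rw [h2]
    exact Nat.sub_le_sub_left h1 _
  have hkey := gbinom_mul_card_le F n s
  rw [card_li] at hkey
  have h1 : gbinom F n s * (q^(s-1)*(q-1))^s ≤ q^(n*s) :=
    le_trans (Nat.mul_le_mul_left _ hP) hkey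
  have harith : n * s = s*(n-s) + (s-1)*s + s := by
    obtain ⟨d, rfl⟩ : ∃ d, n = s + d := ⟨n - s, by omega⟩
    rcases s with _ | s'
    · simp
    · have : s' + 1 + d - (s'+1) = d := by omega
      rw [this]
      simp only [Nat.add_sub_cancel]
      ring
  have h2 : q^(n*s) ≤ (2^s * q^(s*(n-s))) * (q^(s-1)*(q-1))^s := by
    have hqq : q ≤ 2*(q-1) := by omega
    calc q^(n*s) = q^(s*(n-s)) * q^((s-1)*s) * q^s := by
          rw [← pow_add, ← pow_add, harith]
      _ ≤ q^(s*(n-s)) * q^((s-1)*s) * (2*(q-1))^s := by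
          exact Nat.mul_le_mul_left _ (Nat.pow_le_pow_left hqq s)
      _ = (2^s * q^(s*(n-s))) * (q^(s-1)*(q-1))^s := by
          rw [mul_pow, mul_pow, ← pow_mul]
          ring
  have hpos : 0 < (q^(s-1)*(q-1))^s := by
    have : 1 ≤ q - 1 := by omega
    exact Nat.pow_pos (Nat.mul_pos (Nat.pow_pos (by omega)) (by omega))
  exact Nat.le_of_mul_le_mul_right (h1.trans h2) hpos


lemma pad_exists {t : ℕ} (n : Fin t → ℕ) :
    ∀ (d : ℕ) (v : Fin t → ℕ), (∀ i, v i ≤ n i) → (∑ i, v i) + d ≤ ∑ i, n i →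
    ∃ u : Fin t → ℕ, (∀ i, v i ≤ u i) ∧ (∀ i, u i ≤ n i) ∧ ∑ i, u i = (∑ i, v i) + d := by
  intro d
  induction d with
  | zero => exact fun v hv _ => ⟨v, fun i => le_refl _, hv, by simp⟩
  | succ d ih =>
    intro v hv hsum
    obtain ⟨u, h1, h2, h3⟩ := ih v hv (by omega)
    have hlt : ∑ i, u i < ∑ i, n i := by omega
    obtain ⟨i, -, hi⟩ := Finset.exists_lt_of_sum_lt hlt
    refine ⟨fun j => if j = i then u j + 1 else u j, fun j => ?_, fun j => ?_, ?_⟩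
    · have := h1 j
      show v j ≤ if j = i then u j + 1 else u j
      split <;> omega
    · have h2j := h2 j
      show (if j = i then u j + 1 else u j) ≤ n j
      split
      · next h => subst h; omega
      · exact h2j
    · have heq : (fun j => if j = i then u j + 1 else u j) =
          fun j => u j + (if j = i then 1 else 0) := by
        funext j; by_cases h : j = i <;> simp [h]
      rw [heq, Finset.sum_add_distrib, Finset.sum_ite_eq' univ i (fun _ => 1)]
      simp [h3]; omega

lemma slack {t : ℕ} (n m : Fin t → ℕ) (hn : ∀ i, 1 ≤ n i) (hnm : ∀ i, n i ≤ m i)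
    (r : ℕ) (hr1 : 1 ≤ r) (hrN : r ≤ ∑ i, n i)
    (s : Fin t → ℕ) (hsn : ∀ i, s i ≤ n i) (hs2 : 2 * ∑ i, s i ≤ r) :
    ∃ u : Fin t → ℕ, (∀ i, u i ≤ n i) ∧ (∑ i, u i = r) ∧
      (∑ i, (s i * (n i - s i) + m i * s i)) + 1 ≤ ∑ i, m i * u i := by
  set v : Fin t → ℕ := fun i => min (2 * s i) (n i) with hv
  have hvn : ∀ i, v i ≤ n i := fun i => min_le_right _ _
  have hvs : ∀ i, v i ≤ 2 * s i := fun i => min_le_left _ _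
  have hsv : ∑ i, v i ≤ 2 * ∑ i, s i := by
    rw [Finset.mul_sum]; exact Finset.sum_le_sum fun i _ => hvs i
  obtain ⟨u, hu1, hu2, hu3⟩ := pad_exists n (r - ∑ i, v i) v hvn (by omega)
  have hsu : ∑ i, u i = r := by omega
  refine ⟨u, hu2, hsu, ?_⟩
  have hPlt : ∀ i, 1 ≤ s i →
      s i * (n i - s i) + m i * s i + v i + 1 ≤ m i * v i + 2 * s i := by
    intro i h1
    obtain ⟨a, ha⟩ : ∃ a, n i = s i + a := ⟨n i - s i, by have := hsn i; omega⟩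
    have hsub : n i - s i = a := by omega
    have hm : s i + a ≤ m i := ha ▸ hnm i
    rcases le_or_gt (2 * s i) (n i) with hcase | hcase
    · have hve : v i = 2 * s i := min_eq_left hcase
      rw [hve, hsub]
      nlinarith [h1, hm]
    · have hve : v i = n i := min_eq_right (le_of_lt hcase)
      rw [hve, hsub, ha]
      nlinarith [h1, hm]
  have hPle : ∀ i, s i * (n i - s i) + m i * s i + v i ≤ m i * v i + 2 * s i := by
    intro i
    rcases Nat.eq_zero_or_pos (s i) with h0 | h1
    · simp [hv, h0]
    · have := hPlt i h1; omega
  have e1 : ∑ i, ((s i * (n i - s i) + m i * s i) + v i)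
      = (∑ i, (s i * (n i - s i) + m i * s i)) + ∑ i, v i := Finset.sum_add_distrib
  have e2 : ∑ i, (m i * v i + 2 * s i) = (∑ i, m i * v i) + 2 * ∑ i, s i := by
    rw [Finset.sum_add_distrib, Finset.mul_sum]
  have h2 : (∑ i, m i * v i) + (∑ i, (u i - v i)) ≤ ∑ i, m i * u i := by
    rw [← Finset.sum_add_distrib]
    refine Finset.sum_le_sum fun i _ => ?_
    have hui := hu1 i; have hmi := le_trans (hn i) (hnm i)
    obtain ⟨e, he⟩ : ∃ e, u i = v i + e := ⟨u i - v i, by omega⟩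
    have he2 : u i - v i = e := by omega
    rw [he2, he]
    nlinarith
  have h3 : (∑ i, v i) + (∑ i, (u i - v i)) = r := by
    rw [← Finset.sum_add_distrib, ← hsu]
    exact Finset.sum_congr rfl fun i _ => by have := hu1 i; omega
  rcases Nat.eq_zero_or_pos (∑ i, s i) with hk | hk
  · have h1 : ∑ i, ((s i * (n i - s i) + m i * s i) + v i) ≤ ∑ i, (m i * v i + 2 * s i) :=
      Finset.sum_le_sum fun i _ => hPle i
    omega
  · have hex : ∃ i, 1 ≤ s i := by
      by_contra h
      push_neg at h
      simp only [Nat.lt_one_iff] at h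
      have h0 : ∑ i, s i = 0 := Finset.sum_eq_zero fun i _ => h i
      omega
    obtain ⟨i, hi⟩ := hex
    have h1s : ∑ i, ((s i * (n i - s i) + m i * s i) + v i) < ∑ i, (m i * v i + 2 * s i) := by
      refine Finset.sum_lt_sum (fun i _ => hPle i) ⟨i, mem_univ i, ?_⟩
      have := hPlt i hi; omega
    omega

/-- For fixed block sizes n_i ≤ m_i, let K = max{Σ m_i u_i : u_i ≤ n_i, Σ u_i = r} be
the maximal dimension of a linear r-anticode, and ρ = ⌊r/2⌋. For all sufficiently
large field sizes q, the cardinality V_ρ of the sum-rank ball of radius ρ is strictly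
smaller than q^K, the size of an optimal linear r-anticode. -/
theorem ball_lt_anticode_large_q {t : ℕ} (ht : 1 ≤ t) (n m : Fin t → ℕ)
    (hn : ∀ i, 1 ≤ n i) (hnm : ∀ i, n i ≤ m i)
    (r : ℕ) (hr1 : 1 ≤ r) (hrN : r ≤ ∑ i, n i)
    (K : ℕ)
    (hK : K = sSup {k : ℕ | ∃ u : Fin t → ℕ,
      (∀ i, u i ≤ n i) ∧ (∑ i, u i = r) ∧ k = ∑ i, m i * u i}) :
    ∃ Q : ℕ, ∀ (F : Type) [Field F] [Fintype F], Q ≤ Fintype.card F →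
      (∑ k ∈ range (r / 2 + 1),
          ∑ s ∈ univ.filter (fun s : (i : Fin t) → Fin (n i + 1) => ∑ i, (s i : ℕ) = k),
            ∏ i, gbinom F (n i) (s i) *
              ∏ j ∈ range (s i), (Fintype.card F ^ m i - Fintype.card F ^ j))
        < Fintype.card F ^ K := by
  classical
  have hbdd : BddAbove {k : ℕ | ∃ u : Fin t → ℕ,
      (∀ i, u i ≤ n i) ∧ (∑ i, u i = r) ∧ k = ∑ i, m i * u i} := by
    refine ⟨∑ i, m i * n i, ?_⟩
    rintro k ⟨u, hu1, hu2, rfl⟩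
    exact Finset.sum_le_sum fun i _ => Nat.mul_le_mul_left _ (hu1 i)
  have hKge : ∀ u : Fin t → ℕ, (∀ i, u i ≤ n i) → (∑ i, u i = r) →
      ∑ i, m i * u i ≤ K := by
    intro u h1 h2
    rw [hK]
    exact le_csSup hbdd ⟨u, h1, h2, rfl⟩
  clear hK hbdd
  set N := ∑ i, n i with hN
  set P := ∏ i, (n i + 1) with hP
  refine ⟨(r / 2 + 1) * P * 2 ^ N + 2, ?_⟩
  intro F _ _ hQ
  set q := Fintype.card F with hq
  have hCpos : 1 ≤ (r / 2 + 1) * P * 2 ^ N := by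
    have hP1 : 1 ≤ P := Finset.one_le_prod' fun i _ => by omega
    have h2N : 1 ≤ 2 ^ N := Nat.one_le_two_pow
    calc 1 = 1 * 1 * 1 := by norm_num
      _ ≤ (r / 2 + 1) * P * 2 ^ N := by
          exact Nat.mul_le_mul (Nat.mul_le_mul (by omega) hP1) h2N
  have hq2 : 2 ≤ q := by omega
  have hq1 : 1 ≤ q := by omega
  have hK1 : 1 ≤ K := by
    obtain ⟨u, -, hu2, hu3⟩ := pad_exists n r (fun _ => 0)
      (fun i => Nat.zero_le _) (by simpa using hrN)
    have h3 : ∑ i, u i = r := by simpa using hu3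
    have hle := hKge u hu2 h3
    have hge : r ≤ ∑ i, m i * u i := by
      rw [← h3]
      refine Finset.sum_le_sum fun i _ => ?_
      have hm1 : 1 ≤ m i := le_trans (hn i) (hnm i)
      nlinarith
    omega
  have hterm : ∀ k ∈ range (r/2+1),
      ∀ s ∈ univ.filter (fun s : (i : Fin t) → Fin (n i + 1) => ∑ i, (s i : ℕ) = k),
      (∏ i, gbinom F (n i) (s i) * ∏ j ∈ range (s i), (q ^ m i - q ^ j))
        ≤ 2 ^ N * q ^ (K - 1) := by
    intro k hk s hs
    simp only [mem_filter, mem_univ, true_and] at hs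
    rw [mem_range] at hk
    have hsn' : ∀ i, (s i : ℕ) ≤ n i := fun i => Nat.lt_succ_iff.mp (s i).isLt
    have hp : ∀ i ∈ univ, gbinom F (n i) (s i) * ∏ j ∈ range (s i), (q ^ m i - q ^ j)
        ≤ 2 ^ (s i : ℕ) * q ^ ((s i : ℕ) * (n i - (s i : ℕ)) + m i * (s i : ℕ)) := by
      intro i _
      have hA := gbinom_le F (hsn' i) hq2
      have hB : ∏ j ∈ range (s i), (q ^ m i - q ^ j) ≤ q ^ (m i * (s i : ℕ)) := by
        calc ∏ j ∈ range (s i), (q ^ m i - q ^ j)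
            ≤ ∏ _j ∈ range (s i), q ^ m i :=
              Finset.prod_le_prod' fun j _ => Nat.sub_le _ _
          _ = q ^ (m i * (s i : ℕ)) := by
              rw [Finset.prod_const, card_range, ← pow_mul]
      calc gbinom F (n i) (s i) * ∏ j ∈ range (s i), (q ^ m i - q ^ j)
          ≤ (2 ^ (s i : ℕ) * q ^ ((s i : ℕ) * (n i - (s i : ℕ)))) * q ^ (m i * (s i : ℕ)) :=
            Nat.mul_le_mul hA hB
        _ = 2 ^ (s i : ℕ) * q ^ ((s i : ℕ) * (n i - (s i : ℕ)) + m i * (s i : ℕ)) := by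
            rw [mul_assoc, ← pow_add]
    calc (∏ i, gbinom F (n i) (s i) * ∏ j ∈ range (s i), (q ^ m i - q ^ j))
        ≤ ∏ i, (2 ^ (s i : ℕ) * q ^ ((s i : ℕ) * (n i - (s i : ℕ)) + m i * (s i : ℕ))) :=
          Finset.prod_le_prod' hp
      _ = 2 ^ (∑ i, (s i : ℕ)) *
            q ^ (∑ i, ((s i : ℕ) * (n i - (s i : ℕ)) + m i * (s i : ℕ))) := by
          rw [Finset.prod_mul_distrib, Finset.prod_pow_eq_pow_sum, Finset.prod_pow_eq_pow_sum]
      _ ≤ 2 ^ N * q ^ (K - 1) := by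
          have hD : (∑ i, ((s i : ℕ) * (n i - (s i : ℕ)) + m i * (s i : ℕ))) + 1 ≤ K := by
            obtain ⟨u, hu1, hu2, hu3⟩ := slack n m hn hnm r hr1 hrN
              (fun i => (s i : ℕ)) hsn' (show 2 * ∑ i, ((s i : ℕ)) ≤ r by omega)
            have hKu := hKge u hu1 hu2
            have hu3' : (∑ i, ((s i : ℕ) * (n i - (s i : ℕ)) + m i * (s i : ℕ))) + 1
                ≤ ∑ i, m i * u i := hu3
            omega
          refine Nat.mul_le_mul (Nat.pow_le_pow_right (by norm_num) ?_)
            (Nat.pow_le_pow_right hq1 (by omega))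
          exact Finset.sum_le_sum fun i _ => hsn' i
  have hfil : ∀ k : ℕ, (univ.filter
      (fun s : (i : Fin t) → Fin (n i + 1) => ∑ i, (s i : ℕ) = k)).card ≤ P := by
    intro k
    refine le_trans (Finset.card_filter_le _ _) ?_
    rw [card_univ]
    simp [Fintype.card_pi, hP]
  calc (∑ k ∈ range (r / 2 + 1),
          ∑ s ∈ univ.filter (fun s : (i : Fin t) → Fin (n i + 1) => ∑ i, (s i : ℕ) = k),
            ∏ i, gbinom F (n i) (s i) * ∏ j ∈ range (s i), (q ^ m i - q ^ j))
      ≤ ∑ k ∈ range (r / 2 + 1), P * (2 ^ N * q ^ (K - 1)) := by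
        refine Finset.sum_le_sum fun k hk => ?_
        refine le_trans (Finset.sum_le_card_nsmul _ _ _ (hterm k hk)) ?_
        rw [smul_eq_mul]
        exact Nat.mul_le_mul_right _ (hfil k)
    _ = (r / 2 + 1) * P * 2 ^ N * q ^ (K - 1) := by
        rw [Finset.sum_const, card_range, smul_eq_mul]
        ring
    _ < q * q ^ (K - 1) := by
        have hqpos : 0 < q ^ (K - 1) := Nat.pow_pos (by omega)
        exact Nat.mul_lt_mul_of_lt_of_le (by omega) (le_refl _) hqpos
    _ = q ^ K := by
        rw [← pow_succ']
        congr 1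
        omega
end
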